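/- arXiv:0709.3741 — 2 statements merged into one kernel-verified Lean document; each statement's English description precedes it below -/
import Mathlib

section
/- Let A be a unital complex *-algebra and let T be the Toeplitz *-algebra, the quotient of the free *-algebra on one generator u by the two-sided ideal generated by the self-adjoint element u*u − 1. Then A is completely positive if and only if the tensor product *-algebra A ⊗ T, with involution determined by (a ⊗ t)* = a* ⊗ t*, is positive, i.e. z*z = 0 implies z = 0 for z ∈ A ⊗ T. -/
noncomputable section FreeStarAlgebraSection

/-- Letters of the free `*`-algebra on `n` generators: `Sum.inl i` is the generator `xᵢ`
and `Sum.inr i` is its formal adjoint `xᵢ*`. -/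
abbrev FreeStarLetter (n : ℕ) : Type := Fin n ⊕ Fin n

/-- The free `*`-algebra on `n` generators: the free associative unital `ℂ`-algebra on the
`2n` generators `x₁, …, x_n, x₁*, …, x_n*`, realized as the monoid algebra over `ℂ` of the free
monoid on the corresponding `2n` letters.  The involution (defined below) is the unique
conjugate-linear anti-automorphism exchanging `xᵢ` and `xᵢ*`. -/
abbrev FreeStarAlgebra (n : ℕ) : Type := MonoidAlgebra ℂ (FreeMonoid (FreeStarLetter n))

namespace FreeStarAlgebra

variable {n : ℕ}

/-- The involution on words: reverse the word and exchange the letters `xᵢ` and `xᵢ*`. -/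
def wordStar (w : FreeMonoid (FreeStarLetter n)) : FreeMonoid (FreeStarLetter n) :=
  star (FreeMonoid.map Sum.swap w)

@[simp] theorem wordStar_mul (u v : FreeMonoid (FreeStarLetter n)) :
    wordStar (u * v) = wordStar v * wordStar u := by
  simp [wordStar, map_mul, star_mul]

@[simp] theorem wordStar_one : wordStar (1 : FreeMonoid (FreeStarLetter n)) = 1 := by
  simp [wordStar]

@[simp] theorem wordStar_of (v : FreeStarLetter n) :
    wordStar (FreeMonoid.of v) = FreeMonoid.of v.swap := by
  simp [wordStar]

@[simp] theorem wordStar_wordStar (w : FreeMonoid (FreeStarLetter n)) :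
    wordStar (wordStar w) = w := by
  induction w using FreeMonoid.recOn with
  | one => simp
  | of_mul x xs ih => simp [ih]

/-- The involution of the free `*`-algebra as an additive map:
`∑ c_w • w  ↦  ∑ conj (c_w) • w*`. -/
def starAddHom : FreeStarAlgebra n →+ FreeStarAlgebra n :=
  (Finsupp.liftAddHom fun w =>
    (MonoidAlgebra.singleAddHom (wordStar w)).comp (starAddEquiv (R := ℂ)).toAddMonoidHom).comp
    MonoidAlgebra.coeffAddEquiv.toAddMonoidHom

theorem starAddHom_single (w : FreeMonoid (FreeStarLetter n)) (c : ℂ) :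
    starAddHom (MonoidAlgebra.single w c) =
      MonoidAlgebra.single (wordStar w) (starRingEnd ℂ c) :=
  Finsupp.liftAddHom_apply_single _ _ _

instance instStarRing : StarRing (FreeStarAlgebra n) where
  star f := starAddHom f
  star_involutive f := by
    show starAddHom (starAddHom f) = f
    induction f using MonoidAlgebra.induction_linear with
    | zero => simp
    | add f g hf hg => simp [map_add, hf, hg]
    | single w c => simp [starAddHom_single]
  star_add f g := by
    show starAddHom (f + g) = starAddHom f + starAddHom g
    simp [map_add]
  star_mul f g := by
    show starAddHom (f * g) = starAddHom g * starAddHom f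
    induction f using MonoidAlgebra.induction_linear with
    | zero => simp
    | add f₁ f₂ h₁ h₂ => simp [add_mul, mul_add, map_add, h₁, h₂]
    | single w c =>
      induction g using MonoidAlgebra.induction_linear with
      | zero => simp
      | add g₁ g₂ h₁ h₂ => simp [add_mul, mul_add, map_add, h₁, h₂]
      | single w' c' =>
        rw [MonoidAlgebra.single_mul_single, starAddHom_single, starAddHom_single,
          starAddHom_single, MonoidAlgebra.single_mul_single]
        simp [wordStar, map_mul, star_mul, mul_comm]

@[simp] theorem star_single (w : FreeMonoid (FreeStarLetter n)) (c : ℂ) :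
    star (MonoidAlgebra.single w c : FreeStarAlgebra n) =
      MonoidAlgebra.single (wordStar w) (starRingEnd ℂ c) :=
  starAddHom_single w c

instance instStarModule : StarModule ℂ (FreeStarAlgebra n) where
  star_smul c f := by
    show starAddHom (c • f) = starRingEnd ℂ c • starAddHom f
    induction f using MonoidAlgebra.induction_linear with
    | zero => simp
    | add f g hf hg => simp [smul_add, map_add, hf, hg]
    | single w c' =>
      rw [MonoidAlgebra.smul_single, starAddHom_single, starAddHom_single,
        MonoidAlgebra.smul_single]
      simp [smul_eq_mul]

/-- The `i`-th generator `xᵢ` of the free `*`-algebra. -/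
def gen (n : ℕ) (i : Fin n) : FreeStarAlgebra n :=
  MonoidAlgebra.single (FreeMonoid.of (Sum.inl i)) 1

@[simp] theorem star_gen (i : Fin n) :
    star (gen n i) = MonoidAlgebra.single (FreeMonoid.of (Sum.inr i)) 1 := by
  simp [gen]

end FreeStarAlgebra
end FreeStarAlgebraSection

section Props

variable (B : Type) [Ring B] [Star B]

/-- `B` is completely positive: `x₁*x₁ + ⋯ + x_n*x_n = 0` only has the zero solution. -/
def CompletelyPositive : Prop :=
  ∀ (n : ℕ), 0 < n → ∀ f : Fin n → B, ∑ i, star (f i) * f i = 0 → ∀ i, f i = 0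

end Props

noncomputable section Toeplitz
open FreeStarAlgebra

/-- The generator `u` of the free `*`-algebra on one generator. -/
def u : FreeStarAlgebra 1 := gen 1 0

/-- The defining (self-adjoint) relation `u*u - 1` of the Toeplitz `*`-algebra. -/
def toeplitzRel : FreeStarAlgebra 1 → FreeStarAlgebra 1 → Prop := fun f g =>
  f = star u * u - 1 ∧ g = 0

theorem toeplitzRel_star : ∀ f g, toeplitzRel f g → toeplitzRel (star f) (star g) := by
  rintro f g ⟨rfl, rfl⟩
  exact ⟨by simp [star_sub, star_mul], by simp⟩

/-- The Toeplitz `*`-algebra `T = ℂ⟨u, u* | u*u = 1⟩`: the quotient of the free `*`-algebra on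
one generator `u` by the two-sided ideal generated by the self-adjoint element `u*u - 1`. -/
abbrev ToeplitzAlgebra : Type := RingQuot toeplitzRel

instance : StarRing ToeplitzAlgebra := RingQuot.starRing toeplitzRel toeplitzRel_star

theorem toeplitz_star_quot (f : FreeStarAlgebra 1) :
    star (⟨Quot.mk _ f⟩ : ToeplitzAlgebra) = ⟨Quot.mk _ (star f)⟩ :=
  rfl

instance : StarModule ℂ ToeplitzAlgebra := by
  constructor
  rintro c ⟨⟨f⟩⟩
  rw [RingQuot.smul_quot, toeplitz_star_quot, toeplitz_star_quot, star_smul,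
    ← RingQuot.smul_quot]

end Toeplitz

noncomputable section TensorStar

open scoped TensorProduct

variable (A : Type) [Ring A] [Algebra ℂ A] [StarRing A] [StarModule ℂ A]

/-- The involution on `A ⊗ T` determined by `(a ⊗ t)* = a* ⊗ t*`, as an additive map. -/
def tensorStarAddHom : A ⊗[ℂ] ToeplitzAlgebra →+ A ⊗[ℂ] ToeplitzAlgebra :=
  TensorProduct.liftAddHom
    (AddMonoidHom.mk'
      (fun (a : A) => AddMonoidHom.mk' (fun (t : ToeplitzAlgebra) => star a ⊗ₜ[ℂ] star t)
        (fun t₁ t₂ => by simp only [star_add, TensorProduct.tmul_add]))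
      (fun a₁ a₂ => by
        ext t
        simp [star_add, TensorProduct.add_tmul]))
    (fun c a t => by
      simp only [AddMonoidHom.mk'_apply, star_smul, TensorProduct.smul_tmul])

/-- The involution on the tensor product `*`-algebra `A ⊗ T`:
it is determined by `(a ⊗ t)* = a* ⊗ t*`. -/
instance : Star (A ⊗[ℂ] ToeplitzAlgebra) := ⟨tensorStarAddHom A⟩

@[simp] theorem star_tmul (a : A) (t : ToeplitzAlgebra) :
    star (a ⊗ₜ[ℂ] t) = star a ⊗ₜ[ℂ] star t :=
  TensorProduct.liftAddHom_tmul _ _ a t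

namespace ToepAux

open FreeStarAlgebra

/-- canonical map to the Toeplitz algebra -/
def ι : FreeStarAlgebra 1 →ₐ[ℂ] ToeplitzAlgebra := RingQuot.mkAlgHom ℂ toeplitzRel

def U : ToeplitzAlgebra := ι u
def V : ToeplitzAlgebra := ι (star u)
def P : ToeplitzAlgebra := 1 - U * V
def E (m k : ℕ) : ToeplitzAlgebra := U ^ m * P * V ^ k

theorem ι_apply (f : FreeStarAlgebra 1) : ι f = ⟨Quot.mk _ f⟩ := by
  show RingQuot.mkAlgHom ℂ toeplitzRel f = _
  simp [RingQuot.mkAlgHom_def, RingQuot.mkRingHom_def]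

theorem star_ι (f : FreeStarAlgebra 1) : star (ι f) = ι (star f) := by
  rw [ι_apply, ι_apply, toeplitz_star_quot]

theorem hVU : V * U = 1 := by
  have h := RingQuot.mkAlgHom_rel ℂ (s := toeplitzRel) ⟨rfl, rfl⟩
  have : ι (star u * u - 1) = ι 0 := h
  rw [map_sub, map_mul, map_one, map_zero, sub_eq_zero] at this
  exact this

theorem star_U : star U = V := star_ι u

theorem star_V : star V = U := by
  rw [← star_U, star_star]

theorem star_P : star P = P := by
  simp [P, star_sub, star_mul, star_U, star_V]

theorem hVpUp (k : ℕ) : V ^ k * U ^ k = 1 := by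
  induction k with
  | zero => simp
  | succ n ih =>
    rw [pow_succ, pow_succ']
    calc V ^ n * V * (U * U ^ n) = V ^ n * (V * U) * U ^ n := by noncomm_ring
    _ = 1 := by rw [hVU, mul_one]; exact ih

theorem hVaUb_le {a b : ℕ} (h : a ≤ b) : V ^ a * U ^ b = U ^ (b - a) := by
  calc V ^ a * U ^ b = V ^ a * (U ^ a * U ^ (b - a)) := by rw [← pow_add, Nat.add_sub_cancel' h]
  _ = V ^ a * U ^ a * U ^ (b - a) := by noncomm_ring
  _ = U ^ (b - a) := by rw [hVpUp, one_mul]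

theorem hVaUb_ge {a b : ℕ} (h : b ≤ a) : V ^ a * U ^ b = V ^ (a - b) := by
  calc V ^ a * U ^ b = V ^ (a - b) * (V ^ b * U ^ b) := by rw [← mul_assoc, ← pow_add, Nat.sub_add_cancel h]
  _ = V ^ (a - b) := by rw [hVpUp, mul_one]

theorem hPU : P * U = 0 := by
  simp only [P, sub_mul, one_mul, mul_assoc, hVU, mul_one, sub_self]

theorem hVP : V * P = 0 := by
  simp only [P, mul_sub, mul_one, ← mul_assoc, hVU, one_mul, sub_self]

theorem hPP : P * P = P := by
  have h2 : P * (U * V) = 0 := by rw [← mul_assoc, hPU, zero_mul]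
  show P * (1 - U * V) = P
  rw [mul_sub, mul_one, h2, sub_zero]

theorem hPUp {a : ℕ} (h : 0 < a) : P * U ^ a = 0 := by
  obtain ⟨b, rfl⟩ : ∃ b, a = b + 1 := ⟨a - 1, by omega⟩
  rw [pow_succ', ← mul_assoc, hPU, zero_mul]

theorem hVpP {a : ℕ} (h : 0 < a) : V ^ a * P = 0 := by
  obtain ⟨b, rfl⟩ : ∃ b, a = b + 1 := ⟨a - 1, by omega⟩
  rw [pow_succ, mul_assoc, hVP, mul_zero]

theorem star_E (m k : ℕ) : star (E m k) = E k m := by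
  simp [E, star_mul, star_pow, star_U, star_V, star_P, mul_assoc]

theorem E_mul_E (m k m' k' : ℕ) :
    E m k * E m' k' = if k = m' then E m k' else 0 := by
  have key : P * (V ^ k * U ^ m') * P = if k = m' then P else 0 := by
    rcases lt_trichotomy k m' with hlt | heq | hgt
    · rw [hVaUb_le hlt.le, hPUp (by omega), zero_mul, if_neg hlt.ne]
    · rw [heq, hVpUp, mul_one, hPP, if_pos rfl]
    · rw [hVaUb_ge hgt.le, mul_assoc, hVpP (by omega), mul_zero, if_neg hgt.ne']
  calc E m k * E m' k' = U ^ m * (P * (V ^ k * U ^ m') * P) * V ^ k' := by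
        simp only [E, mul_assoc]
    _ = _ := by
      rw [key]
      split
      · simp [E, mul_assoc]
      · simp

/-! The shift representation of the Toeplitz algebra on `ℕ →₀ ℂ`. -/

def So : (ℕ →₀ ℂ) →ₗ[ℂ] (ℕ →₀ ℂ) := Finsupp.lmapDomain ℂ ℂ Nat.succ

def So' : (ℕ →₀ ℂ) →ₗ[ℂ] (ℕ →₀ ℂ) :=
  Finsupp.lsum ℂ (fun n => match n with | 0 => 0 | (k+1) => Finsupp.lsingle k)

theorem So_single (n : ℕ) (c : ℂ) : So (Finsupp.single n c) = Finsupp.single (n+1) c := by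
  simp [So, Finsupp.mapDomain_single]

theorem So'_single_zero (c : ℂ) : So' (Finsupp.single 0 c) = 0 := by
  simp [So', Finsupp.lsum_single]

theorem So'_single_succ (k : ℕ) (c : ℂ) :
    So' (Finsupp.single (k+1) c) = Finsupp.single k c := by
  simp [So', Finsupp.lsum_single]

theorem So'_comp_So : So' ∘ₗ So = LinearMap.id := by
  apply Finsupp.lhom_ext
  intro n c
  simp [So_single, So'_single_succ]

def phi : FreeMonoid (FreeStarLetter 1) →* Module.End ℂ (ℕ →₀ ℂ) :=
  FreeMonoid.lift (Sum.elim (fun _ => So) (fun _ => So'))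

def rho0 : FreeStarAlgebra 1 →ₐ[ℂ] Module.End ℂ (ℕ →₀ ℂ) :=
  MonoidAlgebra.lift ℂ _ _ phi

theorem rho0_single (w : FreeMonoid (FreeStarLetter 1)) (c : ℂ) :
    rho0 (MonoidAlgebra.single w c) = c • phi w :=
  MonoidAlgebra.lift_single phi w c

theorem rho0_u : rho0 u = So := by
  rw [show u = MonoidAlgebra.single (FreeMonoid.of (Sum.inl (0 : Fin 1))) 1 from rfl,
    rho0_single, one_smul]
  simp [phi, FreeMonoid.lift_eval_of]

theorem rho0_star_u : rho0 (star u) = So' := by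
  have : star u = MonoidAlgebra.single (FreeMonoid.of (Sum.inr (0 : Fin 1))) 1 :=
    FreeStarAlgebra.star_gen 0
  rw [this, rho0_single, one_smul]
  simp [phi, FreeMonoid.lift_eval_of]

theorem rho0_rel : ∀ ⦃x y : FreeStarAlgebra 1⦄, toeplitzRel x y → rho0 x = rho0 y := by
  rintro _ _ ⟨rfl, rfl⟩
  rw [map_sub, map_mul, map_one, map_zero, rho0_u, rho0_star_u, sub_eq_zero]
  exact So'_comp_So

def rho : ToeplitzAlgebra →ₐ[ℂ] Module.End ℂ (ℕ →₀ ℂ) :=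
  RingQuot.liftAlgHom ℂ ⟨rho0, rho0_rel⟩

theorem rho_U : rho U = So := by
  rw [U, show ι = RingQuot.mkAlgHom ℂ toeplitzRel from rfl, rho,
    RingQuot.liftAlgHom_mkAlgHom_apply, rho0_u]

theorem rho_V : rho V = So' := by
  rw [V, show ι = RingQuot.mkAlgHom ℂ toeplitzRel from rfl, rho,
    RingQuot.liftAlgHom_mkAlgHom_apply, rho0_star_u]

theorem rho_E_zero (i : ℕ) : rho (E i 0) (Finsupp.single 0 1) = Finsupp.single i 1 := by
  have hP : rho P (Finsupp.single 0 1) = Finsupp.single 0 1 := by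
    simp only [P, map_sub, map_one, map_mul, rho_U, rho_V, LinearMap.sub_apply,
      Module.End.one_apply, Module.End.mul_apply]
    rw [So'_single_zero, map_zero, sub_zero]
  have hpow : ∀ (m : ℕ), rho (U ^ m) (Finsupp.single 0 1) = Finsupp.single m 1 := by
    intro m
    induction m with
    | zero => simp
    | succ n ih =>
      rw [pow_succ', map_mul, Module.End.mul_apply, ih, rho_U, So_single]
  rw [E, pow_zero, mul_one, map_mul, Module.End.mul_apply, hP, hpow]

/-- the coordinate functionals -/
def ell (m : ℕ) : ToeplitzAlgebra →ₗ[ℂ] ℂ where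
  toFun t := rho t (Finsupp.single 0 1) m
  map_add' x y := by simp [map_add]
  map_smul' c x := by simp [map_smul]

theorem ell_E (m i : ℕ) : ell m (E i 0) = if m = i then 1 else 0 := by
  show (rho (E i 0) (Finsupp.single 0 1)) m = _
  rw [rho_E_zero, Finsupp.single_apply]
  simp [eq_comm]

theorem ell_P (m : ℕ) : ell m P = if m = 0 then 1 else 0 := by
  have : P = E 0 0 := by simp [E]
  rw [this, ell_E]

/-! Spanning of the Toeplitz algebra by the normal-form monomials `U^i V^j`. -/

theorem mul_left_mem (x : ToeplitzAlgebra)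
    (hx : ∀ p : ℕ × ℕ, x * (U ^ p.1 * V ^ p.2) ∈
      Submodule.span ℂ (Set.range fun p : ℕ × ℕ => (U ^ p.1 * V ^ p.2 : ToeplitzAlgebra)))
    (t : ToeplitzAlgebra)
    (ht : t ∈ Submodule.span ℂ (Set.range fun p : ℕ × ℕ => (U ^ p.1 * V ^ p.2 : ToeplitzAlgebra))) :
    x * t ∈ Submodule.span ℂ (Set.range fun p : ℕ × ℕ => (U ^ p.1 * V ^ p.2 : ToeplitzAlgebra)) := by
  induction ht using Submodule.span_induction with
  | mem y hy => obtain ⟨p, rfl⟩ := hy; exact hx p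
  | zero => rw [mul_zero]; exact Submodule.zero_mem _
  | add y z _ _ hy hz => rw [mul_add]; exact Submodule.add_mem _ hy hz
  | smul c y _ hy => rw [mul_smul_comm]; exact Submodule.smul_mem _ c hy

theorem span_UV :
    Submodule.span ℂ (Set.range fun p : ℕ × ℕ => (U ^ p.1 * V ^ p.2 : ToeplitzAlgebra)) = ⊤ := by
  set M := Submodule.span ℂ (Set.range fun p : ℕ × ℕ => (U ^ p.1 * V ^ p.2 : ToeplitzAlgebra))
    with hM
  have hgen : ∀ p : ℕ × ℕ, (U ^ p.1 * V ^ p.2 : ToeplitzAlgebra) ∈ M :=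
    fun p => Submodule.subset_span ⟨p, rfl⟩
  have hUmem : ∀ t ∈ M, U * t ∈ M := by
    refine mul_left_mem U (fun p => ?_)
    have : U * (U ^ p.1 * V ^ p.2) = U ^ (p.1 + 1) * V ^ p.2 := by
      rw [← mul_assoc, ← pow_succ']
    rw [this]; exact hgen (p.1 + 1, p.2)
  have hVmem : ∀ t ∈ M, V * t ∈ M := by
    refine mul_left_mem V (fun p => ?_)
    rcases p with ⟨a, b⟩
    cases a with
    | zero =>
      have : V * (U ^ 0 * V ^ b) = U ^ 0 * V ^ (b + 1) := by
        rw [pow_zero, one_mul, one_mul, ← pow_succ']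
      rw [this]; exact hgen (0, b + 1)
    | succ n =>
      have : V * (U ^ (n + 1) * V ^ b) = U ^ n * V ^ b := by
        rw [pow_succ', ← mul_assoc, ← mul_assoc, hVU, one_mul]
      rw [this]; exact hgen (n, b)
  have hword : ∀ w : FreeMonoid (FreeStarLetter 1), ι (MonoidAlgebra.single w 1) ∈ M := by
    intro w
    induction w using FreeMonoid.recOn with
    | one =>
      have : (MonoidAlgebra.single (1 : FreeMonoid (FreeStarLetter 1)) (1 : ℂ)) =
          (1 : FreeStarAlgebra 1) := rfl
      rw [this, map_one]
      have : (1 : ToeplitzAlgebra) = U ^ 0 * V ^ 0 := by simp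
      rw [this]; exact hgen (0, 0)
    | of_mul x xs ih =>
      have hsplit : (MonoidAlgebra.single (FreeMonoid.of x * xs) (1 : ℂ)) =
          MonoidAlgebra.single (FreeMonoid.of x) (1 : ℂ) * MonoidAlgebra.single xs 1 := by
        rw [MonoidAlgebra.single_mul_single, one_mul]
      rw [hsplit, map_mul]
      rcases x with i | i
      · have hi : i = 0 := Subsingleton.elim _ _
        subst hi
        have : ι (MonoidAlgebra.single (FreeMonoid.of (Sum.inl (0 : Fin 1))) (1:ℂ)) = U := rfl
        rw [this]; exact hUmem _ ih
      · have hi : i = 0 := Subsingleton.elim _ _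
        subst hi
        have hsu : (MonoidAlgebra.single (FreeMonoid.of (Sum.inr (0 : Fin 1))) (1:ℂ)) = star u :=
          (FreeStarAlgebra.star_gen 0).symm
        rw [hsu]; exact hVmem _ ih
  rw [Submodule.eq_top_iff']
  intro t
  obtain ⟨f, rfl⟩ := RingQuot.mkAlgHom_surjective ℂ toeplitzRel t
  show ι f ∈ M
  induction f using MonoidAlgebra.induction_linear with
  | zero => rw [map_zero]; exact Submodule.zero_mem _
  | add f g hf hg => rw [map_add]; exact Submodule.add_mem _ hf hg
  | single w c =>
    have h2 : (MonoidAlgebra.single w c : FreeStarAlgebra 1) = c • MonoidAlgebra.single w 1 := by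
      rw [MonoidAlgebra.smul_single, smul_eq_mul, mul_one]
    rw [h2, map_smul]
    exact Submodule.smul_mem _ c (hword w)

set_option maxHeartbeats 1000000 in
theorem exists_repr (z : A ⊗[ℂ] ToeplitzAlgebra) :
    ∃ c : (ℕ × ℕ) →₀ A, z = c.sum fun p a => a ⊗ₜ[ℂ] (U ^ p.1 * V ^ p.2) := by
  induction z using TensorProduct.induction_on with
  | zero => exact ⟨0, by simp⟩
  | tmul a t =>
    have ht : t ∈ Submodule.span ℂ
        (Set.range fun p : ℕ × ℕ => (U ^ p.1 * V ^ p.2 : ToeplitzAlgebra)) := by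
      rw [span_UV]; trivial
    obtain ⟨r, hr⟩ := Finsupp.mem_span_range_iff_exists_finsupp.mp ht
    refine ⟨r.mapRange (· • a) (by simp), ?_⟩
    have key := Finsupp.sum_mapRange_index (f := fun cc : ℂ => cc • a) (hf := by simp) (g := r)
      (h := fun (p : ℕ × ℕ) (b : A) => b ⊗ₜ[ℂ] (U ^ p.1 * V ^ p.2)) (fun p => by simp)
    refine Eq.trans ?_ key.symm
    calc a ⊗ₜ[ℂ] t
        = TensorProduct.mk ℂ A ToeplitzAlgebra a
            (r.sum fun p cc => cc • (U ^ p.1 * V ^ p.2)) := by rw [hr]; rfl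
      _ = r.sum fun p cc => TensorProduct.mk ℂ A ToeplitzAlgebra a
            (cc • (U ^ p.1 * V ^ p.2)) := map_finsuppSum _ _ _
      _ = r.sum fun (p : ℕ × ℕ) (cc : ℂ) => (cc • a) ⊗ₜ[ℂ] (U ^ p.1 * V ^ p.2) :=
          Finsupp.sum_congr fun p _ => (TensorProduct.smul_tmul (r p) a _).symm
  | add x y hx hy =>
    obtain ⟨c1, rfl⟩ := hx
    obtain ⟨c2, rfl⟩ := hy
    refine ⟨c1 + c2, ?_⟩
    exact (Finsupp.sum_add_index' (f := c1) (g := c2)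
      (h := fun (p : ℕ × ℕ) (b : A) => b ⊗ₜ[ℂ] (U ^ p.1 * V ^ p.2))
      (fun p => TensorProduct.zero_tmul A _)
      (fun p b₁ b₂ => TensorProduct.add_tmul b₁ b₂ _)).symm

/-! Star and coordinate functionals on the tensor product. -/

set_option maxHeartbeats 1000000 in
theorem tstar_zero : star (0 : A ⊗[ℂ] ToeplitzAlgebra) = 0 := by
  show tensorStarAddHom A 0 = 0
  rw [map_zero]

set_option maxHeartbeats 1000000 in
theorem tstar_add (x y : A ⊗[ℂ] ToeplitzAlgebra) : star (x + y) = star x + star y := by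
  show tensorStarAddHom A (x + y) = tensorStarAddHom A x + tensorStarAddHom A y
  rw [map_add]

set_option maxHeartbeats 1000000 in
theorem tstar_sum {ι' : Type*} (s : Finset ι') (g : ι' → A ⊗[ℂ] ToeplitzAlgebra) :
    star (∑ i ∈ s, g i) = ∑ i ∈ s, star (g i) := by
  show tensorStarAddHom A (∑ i ∈ s, g i) = _
  rw [map_sum]
  rfl

set_option maxHeartbeats 1000000 in
theorem tstar_mul (x y : A ⊗[ℂ] ToeplitzAlgebra) : star (x * y) = star y * star x := by
  induction x using TensorProduct.induction_on with
  | zero => rw [zero_mul, tstar_zero, mul_zero]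
  | add x₁ x₂ h₁ h₂ => rw [add_mul, tstar_add, h₁, h₂, tstar_add, mul_add]
  | tmul a t =>
    induction y using TensorProduct.induction_on with
    | zero => rw [mul_zero, tstar_zero, zero_mul]
    | add y₁ y₂ h₁ h₂ => rw [mul_add, tstar_add, h₁, h₂, tstar_add, add_mul]
    | tmul b s =>
      rw [Algebra.TensorProduct.tmul_mul_tmul, star_tmul, star_tmul, star_tmul,
        star_mul, star_mul, Algebra.TensorProduct.tmul_mul_tmul]

def Phi (m : ℕ) : A ⊗[ℂ] ToeplitzAlgebra →ₗ[ℂ] A :=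
  (TensorProduct.rid ℂ A).toLinearMap ∘ₗ LinearMap.lTensor A (ell m)

set_option maxHeartbeats 1000000 in
theorem Phi_tmul (m : ℕ) (a : A) (t : ToeplitzAlgebra) :
    Phi A m (a ⊗ₜ[ℂ] t) = ell m t • a := by
  simp [Phi, LinearMap.lTensor_tmul, TensorProduct.rid_tmul]

set_option maxHeartbeats 1000000 in
theorem tmul_P_eq_zero {a : A} (h : a ⊗ₜ[ℂ] P = 0) : a = 0 := by
  have := congrArg (Phi A 0) h
  rw [Phi_tmul, map_zero, ell_P] at this
  simpa using this

theorem E_zero_zero : E 0 0 = P := by simp [E]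

theorem E_def0 (j : ℕ) : E j 0 = U ^ j * P := by simp [E]

theorem UV_mul_E (i j' j : ℕ) : (U ^ i * V ^ j') * E j 0 =
    if j' ≤ j then E (i + (j - j')) 0 else 0 := by
  rw [E_def0]
  by_cases h : j' ≤ j
  · rw [if_pos h]
    calc U ^ i * V ^ j' * (U ^ j * P) = U ^ i * (V ^ j' * U ^ j) * P := by noncomm_ring
      _ = U ^ i * U ^ (j - j') * P := by rw [hVaUb_le h]
      _ = U ^ (i + (j - j')) * P := by rw [← pow_add]
      _ = E (i + (j - j')) 0 := (E_def0 _).symm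
  · rw [if_neg h]
    calc U ^ i * V ^ j' * (U ^ j * P) = U ^ i * ((V ^ j' * U ^ j) * P) := by noncomm_ring
      _ = U ^ i * (V ^ (j' - j) * P) := by rw [hVaUb_ge (le_of_not_ge h)]
      _ = 0 := by rw [hVpP (by omega), mul_zero]

set_option maxHeartbeats 1000000 in
theorem sum_E_star_mul {ι' : Type*} [DecidableEq ι'] (s : Finset ι') (g : ι' → A) (e : ι' → ℕ)
    (hinj : ∀ x ∈ s, ∀ y ∈ s, e x = e y → x = y) :
    star (∑ i ∈ s, g i ⊗ₜ[ℂ] E (e i) 0) * (∑ i ∈ s, g i ⊗ₜ[ℂ] E (e i) 0)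
      = (∑ i ∈ s, star (g i) * g i) ⊗ₜ[ℂ] P := by
  rw [tstar_sum]
  have hstar : ∀ i, star (g i ⊗ₜ[ℂ] E (e i) 0) = star (g i) ⊗ₜ[ℂ] E 0 (e i) := by
    intro i
    rw [star_tmul, star_E]
  rw [Finset.sum_congr rfl (fun i _ => hstar i), Finset.sum_mul_sum]
  have hterm : ∀ i ∈ s, ∀ k ∈ s,
      (star (g i) ⊗ₜ[ℂ] E 0 (e i)) * (g k ⊗ₜ[ℂ] E (e k) 0)
        = if i = k then (star (g i) * g k) ⊗ₜ[ℂ] P else 0 := by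
    intro i hi k hk
    rw [Algebra.TensorProduct.tmul_mul_tmul, E_mul_E, E_zero_zero]
    by_cases h : i = k
    · rw [if_pos h, if_pos (by rw [h])]
    · rw [if_neg h, if_neg (fun hek => h (hinj i hi k hk hek)), TensorProduct.tmul_zero]
  calc ∑ i ∈ s, ∑ k ∈ s, (star (g i) ⊗ₜ[ℂ] E 0 (e i)) * (g k ⊗ₜ[ℂ] E (e k) 0)
      = ∑ i ∈ s, ∑ k ∈ s, (if i = k then (star (g i) * g k) ⊗ₜ[ℂ] P else 0) := by
        refine Finset.sum_congr rfl fun i hi => Finset.sum_congr rfl fun k hk => hterm i hi k hk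
    _ = ∑ i ∈ s, (star (g i) * g i) ⊗ₜ[ℂ] P := by
        refine Finset.sum_congr rfl fun i hi => ?_
        rw [Finset.sum_ite_eq s i (fun k => (star (g i) * g k) ⊗ₜ[ℂ] P), if_pos hi]
    _ = (∑ i ∈ s, star (g i) * g i) ⊗ₜ[ℂ] P := (TensorProduct.sum_tmul s _ P).symm

set_option maxHeartbeats 1000000 in
theorem positive_implies_cp
    (hpos : ∀ z : A ⊗[ℂ] ToeplitzAlgebra, star z * z = 0 → z = 0) :
    CompletelyPositive A := by
  intro n hn f hsum i₀
  set z : A ⊗[ℂ] ToeplitzAlgebra := ∑ i : Fin n, f i ⊗ₜ[ℂ] E (i : ℕ) 0 with hzdef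
  have hzz : star z * z = 0 := by
    rw [hzdef, sum_E_star_mul A Finset.univ f (fun i => (i : ℕ))
      (fun x _ y _ h => Fin.val_injective h), hsum, TensorProduct.zero_tmul]
  have hz0 : z = 0 := hpos z hzz
  have happ := congrArg (Phi A (i₀ : ℕ)) hz0
  rw [hzdef, map_sum, map_zero] at happ
  have hterm : ∀ i : Fin n, Phi A (i₀ : ℕ) (f i ⊗ₜ[ℂ] E (i : ℕ) 0)
      = if i₀ = i then f i else 0 := by
    intro i
    rw [Phi_tmul, ell_E]
    by_cases h : i₀ = i
    · rw [if_pos (by rw [h]), if_pos h, one_smul]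
    · rw [if_neg (fun hv => h (Fin.val_injective hv)), if_neg h, zero_smul]
  rw [Finset.sum_congr rfl (fun i _ => hterm i)] at happ
  rw [Finset.sum_ite_eq Finset.univ i₀ (fun i => f i), if_pos (Finset.mem_univ i₀)] at happ
  exact happ

set_option maxHeartbeats 1000000 in
theorem cp_implies_positive (hcp : CompletelyPositive A)
    (z : A ⊗[ℂ] ToeplitzAlgebra) (hz : star z * z = 0) : z = 0 := by
  obtain ⟨c, hc⟩ := exists_repr A z
  have main : ∀ j, ∀ i, c (i, j) = 0 := by
    intro j
    induction j using Nat.strong_induction_on with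
    | _ j IH =>
    set s : Finset ℕ := c.support.image Prod.fst with hs
    -- Step A : compute z * (1 ⊗ E j 0)
    have hw : z * ((1 : A) ⊗ₜ[ℂ] E j 0) = ∑ i' ∈ s, c (i', j) ⊗ₜ[ℂ] E i' 0 := by
      rw [hc, Finsupp.sum_mul]
      have hterm : ∀ p ∈ c.support,
          (c p ⊗ₜ[ℂ] (U ^ p.1 * V ^ p.2)) * ((1 : A) ⊗ₜ[ℂ] E j 0)
            = if p.2 = j then c (p.1, j) ⊗ₜ[ℂ] E p.1 0 else 0 := by
        intro p _
        rw [Algebra.TensorProduct.tmul_mul_tmul, mul_one, UV_mul_E]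
        rcases lt_trichotomy p.2 j with hlt | heq | hgt
        · have hcp0 : c p = 0 := by
            have := IH p.2 hlt p.1
            rwa [Prod.mk.eta] at this
          rw [if_pos hlt.le, if_neg hlt.ne, hcp0, TensorProduct.zero_tmul]
        · rw [if_pos heq.le, if_pos heq, ← heq, Nat.sub_self, Nat.add_zero, Prod.mk.eta]
        · rw [if_neg (by omega), if_neg (by omega), TensorProduct.tmul_zero]
      rw [Finsupp.sum, Finset.sum_congr rfl hterm, ← Finset.sum_filter]
      have himg : (c.support.filter (fun p => p.2 = j)).image Prod.fst ⊆ s :=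
        Finset.image_subset_image (Finset.filter_subset _ _)
      have hinj : ∀ x ∈ c.support.filter (fun p => p.2 = j),
          ∀ y ∈ c.support.filter (fun p => p.2 = j), x.1 = y.1 → x = y := by
        intro x hx y hy hxy
        rcases Finset.mem_filter.mp hx with ⟨_, hx2⟩
        rcases Finset.mem_filter.mp hy with ⟨_, hy2⟩
        exact Prod.ext hxy (hx2.trans hy2.symm)
      calc ∑ p ∈ c.support.filter (fun p => p.2 = j), c (p.1, j) ⊗ₜ[ℂ] E p.1 0
          = ∑ i' ∈ (c.support.filter (fun p => p.2 = j)).image Prod.fst,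
              c (i', j) ⊗ₜ[ℂ] E i' 0 :=
            (Finset.sum_image (f := fun i' => c (i', j) ⊗ₜ[ℂ] E i' 0) (g := Prod.fst) hinj).symm
        _ = ∑ i' ∈ s, c (i', j) ⊗ₜ[ℂ] E i' 0 := by
            refine Finset.sum_subset himg fun i' hi' hni' => ?_
            have hns : (i', j) ∉ c.support := by
              intro hmem
              have hfil : (i', j) ∈ c.support.filter (fun p => p.2 = j) :=
                Finset.mem_filter.mpr ⟨hmem, rfl⟩
              exact hni' (Finset.mem_image_of_mem Prod.fst hfil)
            rw [Finsupp.notMem_support_iff.mp hns, TensorProduct.zero_tmul]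
    -- Step B : star w * w = 0
    have hww : star (z * ((1 : A) ⊗ₜ[ℂ] E j 0)) * (z * ((1 : A) ⊗ₜ[ℂ] E j 0)) = 0 := by
      rw [tstar_mul]
      calc star ((1 : A) ⊗ₜ[ℂ] E j 0) * star z * (z * ((1 : A) ⊗ₜ[ℂ] E j 0))
          = star ((1 : A) ⊗ₜ[ℂ] E j 0) * (star z * z) * ((1 : A) ⊗ₜ[ℂ] E j 0) := by
            noncomm_ring
        _ = 0 := by rw [hz, mul_zero, zero_mul]
    -- Step C : the sum of squares vanishes
    have h2 := sum_E_star_mul A s (fun i' => c (i', j)) (fun x => x) (fun x _ y _ h => h)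
    rw [← hw, hww] at h2
    have hsq : ∑ i' ∈ s, star (c (i', j)) * c (i', j) = 0 :=
      tmul_P_eq_zero A h2.symm
    -- Step D : apply complete positivity
    obtain ⟨N, hN⟩ := s.exists_nat_subset_range
    have hsub : s ⊆ Finset.range (N + 1) :=
      hN.trans (Finset.range_subset_range.mpr (by omega))
    set f : Fin (N + 1) → A := fun k => if (k : ℕ) ∈ s then c ((k : ℕ), j) else 0 with hf
    have hsum0 : ∑ k : Fin (N + 1), star (f k) * f k = 0 := by
      have hk : ∀ k : Fin (N + 1), star (f k) * f k
          = (fun m => if m ∈ s then star (c (m, j)) * c (m, j) else 0) (k : ℕ) := by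
        intro k
        by_cases h : (k : ℕ) ∈ s
        · simp only [hf, if_pos h]
        · simp only [hf, if_neg h, star_zero, mul_zero]
      rw [Finset.sum_congr rfl (fun k _ => hk k),
        Fin.sum_univ_eq_sum_range (fun m => if m ∈ s then star (c (m, j)) * c (m, j) else 0)]
      rw [Finset.sum_ite_mem, Finset.inter_eq_right.mpr hsub]
      exact hsq
    have hall := hcp (N + 1) (Nat.succ_pos N) f hsum0
    intro i
    by_cases hmem : (i, j) ∈ c.support
    · have his : i ∈ s := Finset.mem_image_of_mem Prod.fst hmem
      have hlt : i < N + 1 := Finset.mem_range.mp (hsub his)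
      have := hall ⟨i, hlt⟩
      simpa [hf, his] using this
    · exact Finsupp.notMem_support_iff.mp hmem
  rw [hc, Finsupp.sum]
  refine Finset.sum_eq_zero fun p _ => ?_
  have hcp0 : c p = 0 := by
    have := main p.2 p.1
    rwa [Prod.mk.eta] at this
  rw [hcp0, TensorProduct.zero_tmul]

end ToepAux

/-- a unital complex `*`-algebra `A` is completely positive if and only if the
tensor product `*`-algebra `A ⊗ T` with the Toeplitz `*`-algebra `T` is positive, i.e.
`z*z = 0` implies `z = 0` in `A ⊗ T`. -/
theorem completelyPositive_iff_tensor_toeplitz_positive :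
    CompletelyPositive A ↔
      ∀ z : A ⊗[ℂ] ToeplitzAlgebra, star z * z = 0 → z = 0 :=
  ⟨fun hcp z hz => ToepAux.cp_implies_positive A hcp z hz,
   fun hpos => ToepAux.positive_implies_cp A hpos⟩

end TensorStar
end

section
/- Let W be the free monoid on the 2n letters x₁,…,x_n,x₁*,…,x_n*, with involution w ↦ w* that reverses each word and exchanges the letters xᵢ and xᵢ*. Let S ⊆ W be a set of words such that S* = S and every word in S is unshrinkable, i.e. cannot be written as d*d·u or u·d*d for some nonempty word d and (possibly empty) word u. Let F be the free *-algebra on x₁,…,x_n and J the two-sided ideal of F generated by S. Then the quotient *-algebra F/J is O*-representable. -/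
section Props

variable (B : Type) [Ring B] [Algebra ℂ B] [Star B]

/-- `B` is O*-representable: there is a faithful `*`-representation of `B` by linear operators
on a complex inner product (pre-Hilbert) space `E`, i.e. an injective `ℂ`-algebra homomorphism
`π : B → L(E)` with `⟪π(b)ξ, η⟫ = ⟪ξ, π(b*)η⟫` for all `b ∈ B` and `ξ, η ∈ E`. -/
def OStarRepresentable : Prop :=
  ∃ (E : Type) (_ : NormedAddCommGroup E) (_ : InnerProductSpace ℂ E)
    (π : B →ₐ[ℂ] Module.End ℂ E),
      Function.Injective π ∧
        ∀ (b : B) (ξ η : E), (inner ℂ (π b ξ) η : ℂ) = inner ℂ ξ (π (star b) η)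

end Props

noncomputable section Stmt17
open FreeStarAlgebra

variable {n : ℕ}

/-- A word `w` is unshrinkable if it cannot be written as `d*d·u` or `u·d*d`
with `d` a nonempty word. -/
def Unshrinkable (w : FreeMonoid (FreeStarLetter n)) : Prop :=
  ¬ ∃ (d u : FreeMonoid (FreeStarLetter n)), d ≠ 1 ∧
      (w = wordStar d * d * u ∨ w = u * (wordStar d * d))

/-- The relations `w = 0` for all words `w` in the set `S`. -/
def monRel (S : Set (FreeMonoid (FreeStarLetter n))) :
    FreeStarAlgebra n → FreeStarAlgebra n → Prop := fun f g =>
  (∃ w ∈ S, f = MonoidAlgebra.single w 1) ∧ g = 0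

theorem monRel_star (S : Set (FreeMonoid (FreeStarLetter n)))
    (hstar : ∀ w ∈ S, wordStar w ∈ S) :
    ∀ f g, monRel S f g → monRel S (star f) (star g) := by
  rintro f g ⟨⟨w, hw, rfl⟩, rfl⟩
  exact ⟨⟨wordStar w, hstar w hw, by simp⟩, by simp⟩


namespace OSAux
open Finset

/-! ### An abstract positive-definiteness criterion (diagonal dominance) -/

theorem amgm {t a b : ℝ} (ht : 0 < t) : a * b ≤ (t * a ^ 2 + t⁻¹ * b ^ 2) / 2 := by
  rw [le_div_iff₀ (by norm_num : (0:ℝ) < 2)]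
  have key : a * b * 2 * t ≤ (t * a ^ 2 + t⁻¹ * b ^ 2) * t := by
    have ht' : t⁻¹ * t = 1 := inv_mul_cancel₀ ht.ne'
    nlinarith [sq_nonneg (t * a - b)]
  exact le_of_mul_le_mul_right key ht

theorem sum_pairs_comm {ι : Type*} [DecidableEq ι] (T : Finset ι) (F : ι → ι → ℝ) :
    ∑ u ∈ T, ∑ v ∈ T.erase u, F u v = ∑ u ∈ T, ∑ v ∈ T.erase u, F v u := by
  have key : ∀ G : ι → ι → ℝ, ∑ u ∈ T, ∑ v ∈ T.erase u, G u v
      = ∑ u ∈ T, ∑ v ∈ T, if v = u then 0 else G u v := by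
    intro G
    refine Finset.sum_congr rfl fun u _ => ?_
    rw [← Finset.filter_ne' T u, Finset.sum_filter]
    exact Finset.sum_congr rfl fun v _ => by
      rcases eq_or_ne v u with h | h <;> simp [h]
  rw [key, key, Finset.sum_comm]
  exact Finset.sum_congr rfl fun u _ => Finset.sum_congr rfl fun v _ =>
    if_congr eq_comm rfl rfl

theorem pd_sum {ι : Type} [DecidableEq ι] (T : Finset ι) (hT : T.Nonempty) (z : ι → ℂ)
    (hz : ∀ u ∈ T, z u ≠ 0) (K : ι → ι → ℝ) (d : ι → ℝ)
    (hKnn : ∀ u v, 0 ≤ K u v) (hKsym : ∀ u v, K u v = K v u) (hd : ∀ u, 0 < d u)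
    (hrow : ∀ u ∈ T, ∑ v ∈ T.erase u, K u v * (d v / d u) ≤ 2 / 3 * K u u)
    (hdiag : ∀ u ∈ T, 0 < K u u) :
    0 < (∑ u ∈ T, ∑ v ∈ T, (starRingEnd ℂ) (z u) * z v * ((K u v : ℝ) : ℂ)).re := by
  classical
  have hre : (∑ u ∈ T, ∑ v ∈ T, (starRingEnd ℂ) (z u) * z v * ((K u v : ℝ) : ℂ)).re
      = ∑ u ∈ T, ∑ v ∈ T, ((starRingEnd ℂ) (z u) * z v).re * K u v := by
    rw [Complex.re_sum]
    refine Finset.sum_congr rfl fun u _ => ?_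
    rw [Complex.re_sum]
    exact Finset.sum_congr rfl fun v _ => by simp [Complex.mul_re]
  rw [hre]
  set nz : ι → ℝ := fun u => Complex.normSq (z u) with hnzdef
  set P : ι → ι → ℝ := fun u v => K u v * (d v / d u) * nz u with hP
  set Q : ι → ι → ℝ := fun u v => K u v * (d u / d v) * nz v with hQ
  have hdiagterm : ∀ u, ((starRingEnd ℂ) (z u) * z u).re = nz u := fun u => by
    rw [← Complex.normSq_eq_conj_mul_self, Complex.ofReal_re]
  have hoff : ∀ u ∈ T, ∀ v ∈ T.erase u,
      -(P u v / 2 + Q u v / 2) ≤ ((starRingEnd ℂ) (z u) * z v).re * K u v := by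
    intro u hu v hv
    have h1 : -(‖z u‖ * ‖z v‖) ≤ ((starRingEnd ℂ) (z u) * z v).re := by
      have h := Complex.abs_re_le_norm ((starRingEnd ℂ) (z u) * z v)
      rw [norm_mul, Complex.norm_conj] at h
      exact neg_le_of_abs_le h
    have h2 : ‖z u‖ * ‖z v‖
        ≤ ((d v / d u) * ‖z u‖ ^ 2 + (d u / d v) * ‖z v‖ ^ 2) / 2 := by
      have ht : (0:ℝ) < d v / d u := div_pos (hd v) (hd u)
      have h3 := amgm (t := d v / d u) (a := ‖z u‖) (b := ‖z v‖) ht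
      rwa [inv_div] at h3
    rw [Complex.sq_norm, Complex.sq_norm] at h2
    have h4 : -(((d v / d u) * nz u + (d u / d v) * nz v) / 2)
        ≤ ((starRingEnd ℂ) (z u) * z v).re := le_trans (neg_le_neg h2) h1
    have h5 := mul_le_mul_of_nonneg_right h4 (hKnn u v)
    have hEq : -(P u v / 2 + Q u v / 2)
        = -(((d v / d u) * nz u + (d u / d v) * nz v) / 2) * K u v := by
      simp only [hP, hQ]; ring
    rw [hEq]; exact h5
  have hswap : ∑ u ∈ T, ∑ v ∈ T.erase u, Q u v = ∑ u ∈ T, ∑ v ∈ T.erase u, P u v := by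
    rw [sum_pairs_comm T Q]
    refine Finset.sum_congr rfl fun u _ => Finset.sum_congr rfl fun v _ => ?_
    simp only [hP, hQ]
    rw [hKsym v u]
  have hrowP : ∀ u ∈ T, ∑ v ∈ T.erase u, P u v ≤ 2 / 3 * K u u * nz u := by
    intro u hu
    have h := mul_le_mul_of_nonneg_right (hrow u hu) (Complex.normSq_nonneg (z u))
    rw [Finset.sum_mul] at h
    exact h
  have hmain : ∀ u ∈ T,
      nz u * K u u - (∑ v ∈ T.erase u, P u v) / 2 - (∑ v ∈ T.erase u, Q u v) / 2
        ≤ ∑ v ∈ T, ((starRingEnd ℂ) (z u) * z v).re * K u v := by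
    intro u hu
    rw [← Finset.add_sum_erase _ _ hu, hdiagterm u]
    have h := Finset.sum_le_sum (hoff u hu)
    have hL : ∑ v ∈ T.erase u, -(P u v / 2 + Q u v / 2)
        = -((∑ v ∈ T.erase u, P u v) / 2) - (∑ v ∈ T.erase u, Q u v) / 2 := by
      rw [Finset.sum_neg_distrib, Finset.sum_add_distrib, Finset.sum_div, Finset.sum_div]
      ring
    rw [hL] at h
    linarith
  have htot : ∑ u ∈ T, (nz u * K u u - (∑ v ∈ T.erase u, P u v) / 2
        - (∑ v ∈ T.erase u, Q u v) / 2)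
      ≤ ∑ u ∈ T, ∑ v ∈ T, ((starRingEnd ℂ) (z u) * z v).re * K u v :=
    Finset.sum_le_sum hmain
  have hsplit : ∑ u ∈ T, (nz u * K u u - (∑ v ∈ T.erase u, P u v) / 2
        - (∑ v ∈ T.erase u, Q u v) / 2)
      = ∑ u ∈ T, nz u * K u u - ∑ u ∈ T, (∑ v ∈ T.erase u, P u v) := by
    rw [Finset.sum_sub_distrib, Finset.sum_sub_distrib]
    rw [← Finset.sum_div, ← Finset.sum_div, hswap]
    ring
  have hlast : ∑ u ∈ T, (1/3 : ℝ) * (nz u * K u u) ≤ ∑ u ∈ T, nz u * K u u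
      - ∑ u ∈ T, (∑ v ∈ T.erase u, P u v) := by
    have h1 : ∑ u ∈ T, (∑ v ∈ T.erase u, P u v) ≤ ∑ u ∈ T, 2/3 * K u u * nz u :=
      Finset.sum_le_sum hrowP
    have h2 : ∑ u ∈ T, nz u * K u u - ∑ u ∈ T, 2/3 * K u u * nz u
        = ∑ u ∈ T, (1/3 : ℝ) * (nz u * K u u) := by
      rw [← Finset.sum_sub_distrib]
      exact Finset.sum_congr rfl fun u _ => by ring
    linarith
  have hpos : 0 < ∑ u ∈ T, (1/3 : ℝ) * (nz u * K u u) := by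
    refine Finset.sum_pos (fun u hu => ?_) hT
    have h1 : 0 < nz u := Complex.normSq_pos.mpr (hz u hu)
    have h2 := hdiag u hu
    positivity
  linarith

end OSAux
namespace OSAux
open Finset FreeStarAlgebra

variable {n : ℕ}

/-! ### Forbidden words -/

/-- `w` contains a factor belonging to `S`. -/
def Forb (S : Set (FreeMonoid (FreeStarLetter n))) (w : FreeMonoid (FreeStarLetter n)) : Prop :=
  ∃ a s b, s ∈ S ∧ w = a * s * b

instance : DecidableEq (FreeMonoid (FreeStarLetter n)) := fun a b =>
  decidable_of_iff (a.toList = b.toList)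
    ⟨fun h => FreeMonoid.toList.injective h, fun h => by rw [h]⟩

variable {S : Set (FreeMonoid (FreeStarLetter n))}

theorem forb_of_mem {s : FreeMonoid (FreeStarLetter n)} (hs : s ∈ S) : Forb S s :=
  ⟨1, s, 1, hs, by simp⟩

theorem Forb.mul_left {w : FreeMonoid (FreeStarLetter n)} (h : Forb S w)
    (u : FreeMonoid (FreeStarLetter n)) : Forb S (u * w) := by
  obtain ⟨a, s, b, hs, rfl⟩ := h
  exact ⟨u * a, s, b, hs, by simp [mul_assoc]⟩

theorem Forb.mul_right {w : FreeMonoid (FreeStarLetter n)} (h : Forb S w)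
    (u : FreeMonoid (FreeStarLetter n)) : Forb S (w * u) := by
  obtain ⟨a, s, b, hs, rfl⟩ := h
  exact ⟨a, s, b * u, hs, by simp [mul_assoc]⟩

theorem Forb.wstar (hstar : ∀ w ∈ S, wordStar w ∈ S)
    {w : FreeMonoid (FreeStarLetter n)} (h : Forb S w) : Forb S (wordStar w) := by
  obtain ⟨a, s, b, hs, rfl⟩ := h
  exact ⟨wordStar b, wordStar s, wordStar a, hstar s hs, by simp [mul_assoc]⟩

theorem forb_wordStar_iff (hstar : ∀ w ∈ S, wordStar w ∈ S)
    {w : FreeMonoid (FreeStarLetter n)} : Forb S (wordStar w) ↔ Forb S w :=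
  ⟨fun h => by simpa using h.wstar hstar, fun h => h.wstar hstar⟩

/-! ### Splitting products of words -/

theorem mul_eq_mul_cases {a b c d : FreeMonoid (FreeStarLetter n)} (h : a * b = c * d) :
    (∃ e, c = a * e ∧ b = e * d) ∨ (∃ e, a = c * e ∧ d = e * b) := by
  have h' : a.toList ++ b.toList = c.toList ++ d.toList := congrArg FreeMonoid.toList h
  rcases List.append_eq_append_iff.mp h' with ⟨e, he1, he2⟩ | ⟨e, he1, he2⟩
  · refine Or.inl ⟨FreeMonoid.ofList e, FreeMonoid.toList.injective ?_, FreeMonoid.toList.injective ?_⟩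
    · simpa using he1
    · simpa using he2
  · refine Or.inr ⟨FreeMonoid.ofList e, FreeMonoid.toList.injective ?_, FreeMonoid.toList.injective ?_⟩
    · simpa using he1
    · simpa using he2

@[simp] theorem length_wordStar (w : FreeMonoid (FreeStarLetter n)) :
    (wordStar w).length = w.length := by
  induction w using FreeMonoid.recOn with
  | one => simp [FreeMonoid.length]
  | of_mul x xs ih =>
    rw [wordStar_mul]
    simp [FreeMonoid.length_mul, ih]
    omega

theorem wordStar_eq_one_iff {w : FreeMonoid (FreeStarLetter n)} : wordStar w = 1 ↔ w = 1 := by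
  constructor
  · intro h
    have := congrArg wordStar h
    simpa using this
  · rintro rfl; simp

theorem one_le_length_of_ne_one {c : FreeMonoid (FreeStarLetter n)} (hc : c ≠ 1) :
    1 ≤ c.length := by
  rcases Nat.eq_zero_or_pos c.length with h | h
  · exact absurd (FreeMonoid.length_eq_zero.mp h) hc
  · exact h

/-- Classification of solutions of `u⋆ v = p⋆ p`. -/
theorem sq_cases {u v p : FreeMonoid (FreeStarLetter n)}
    (h : wordStar u * v = wordStar p * p) :
    (∃ c, v = wordStar c * (c * u)) ∨ (∃ c, u = wordStar c * (c * v)) := by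
  rcases mul_eq_mul_cases h with ⟨e, he1, he2⟩ | ⟨e, he1, he2⟩
  · -- he1 : wordStar p = wordStar u * e, he2 : v = e * p
    have hp : p = wordStar e * u := by
      have := congrArg wordStar he1
      simpa using this
    refine Or.inl ⟨wordStar e, ?_⟩
    rw [he2, hp, wordStar_wordStar]
  · -- he1 : wordStar u = wordStar p * e, he2 : p = e * v
    have hu : u = wordStar e * p := by
      have := congrArg wordStar he1
      simpa using this
    exact Or.inr ⟨e, by rw [hu, he2]⟩

/-- If `u` is unforbidden then so is `u⋆ u`; this is where unshrinkability enters. -/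
theorem not_forb_sq (hstar : ∀ w ∈ S, wordStar w ∈ S)
    (hunshrink : ∀ w ∈ S, Unshrinkable w)
    {u : FreeMonoid (FreeStarLetter n)} (hu : ¬ Forb S u) :
    ¬ Forb S (wordStar u * u) := by
  rintro ⟨a, s, b, hs, heq⟩
  rw [mul_assoc] at heq
  rcases mul_eq_mul_cases heq with ⟨e, hae, hue⟩ | ⟨e, hue, hsb⟩
  · exact hu ⟨e, s, b, hs, by rw [hue, mul_assoc]⟩
  · -- hue : wordStar u = a * e, hsb : s * b = e * u
    rcases mul_eq_mul_cases hsb with ⟨f, hef, hbf⟩ | ⟨f, hsf, huf⟩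
    · -- hef : e = s * f
      exact hu ((forb_wordStar_iff hstar).mp ⟨a, s, f, hs, by rw [hue, hef, mul_assoc]⟩)
    · -- hsf : s = e * f, huf : u = f * b
      have hu2 : u = wordStar e * wordStar a := by
        have := congrArg wordStar hue
        simpa using this
    -- wordStar e * wordStar a = f * b
      rcases mul_eq_mul_cases (hu2.symm.trans huf) with ⟨g, hfg, hag⟩ | ⟨g, heg, hbg⟩
      · -- hfg : f = wordStar e * g
        rcases eq_or_ne e 1 with rfl | he1
        · have : u = s * b := by rw [← one_mul u]; exact hsb.symm
          exact hu ⟨1, s, b, hs, by rw [this, one_mul]⟩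
        · refine hunshrink s hs ⟨wordStar e, g, ?_, Or.inl ?_⟩
          · exact fun hh => he1 (wordStar_eq_one_iff.mp hh)
          · rw [hsf, hfg, wordStar_wordStar, ← mul_assoc]
      · -- heg : wordStar e = f * g, hbg : b = g * wordStar a
        rcases eq_or_ne f 1 with rfl | hf1
        · refine hu ((forb_wordStar_iff hstar).mp ⟨a, s, 1, hs, ?_⟩)
          rw [hue, hsf, mul_one, mul_one]
        · refine hunshrink s hs ⟨f, wordStar g, hf1, Or.inr ?_⟩
          have he : e = wordStar g * wordStar f := by
            have := congrArg wordStar heg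
            simpa using this
          rw [hsf, he, mul_assoc]

/-! ### The weights -/

noncomputable def bI (n : ℕ) : ℝ := 4 * n + 3

theorem bI_pos : 0 < bI n := by unfold bI; positivity

theorem bI_ne : bI n ≠ 0 := (bI_pos).ne'

noncomputable def μv (n : ℕ) : ℝ := (bI n)⁻¹

theorem μv_pos : 0 < μv n := inv_pos.mpr bI_pos

theorem μv_le_third : μv n ≤ 1 / 3 := by
  rw [μv, bI, show (1:ℝ)/3 = (3:ℝ)⁻¹ by norm_num]
  apply inv_anti₀ (by norm_num)
  nlinarith [Nat.cast_nonneg (α := ℝ) n]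

theorem μv_le_one : μv n ≤ 1 := le_trans μv_le_third (by norm_num)

theorem two_n_mul_μv_le : ((n : ℝ) + n) * μv n ≤ 1 / 2 := by
  rw [μv, bI]
  rw [mul_inv_le_iff₀ (by positivity)]
  ring_nf
  nlinarith [Nat.cast_nonneg (α := ℝ) n]

noncomputable def τv (n : ℕ) (m : ℕ) : ℝ := bI n ^ (2 * m * m)

theorem τv_pos {m : ℕ} : 0 < τv n m := pow_pos bI_pos _

noncomputable def dwt (n : ℕ) (w : FreeMonoid (FreeStarLetter n)) : ℝ :=
  μv n ^ (w.length * w.length)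

theorem dwt_pos (w : FreeMonoid (FreeStarLetter n)) : 0 < dwt n w := pow_pos μv_pos _

theorem tau_mu_eq {x y z w : ℕ} (h : 2 * x * x + w = 2 * y * y + z) :
    τv n x * μv n ^ z = τv n y * μv n ^ w := by
  unfold τv μv
  rw [inv_pow, inv_pow, ← div_eq_mul_inv, ← div_eq_mul_inv,
    div_eq_div_iff (pow_ne_zero _ bI_ne) (pow_ne_zero _ bI_ne), ← pow_add, ← pow_add, h]

end OSAux
namespace OSAux
open Finset FreeStarAlgebra

variable {n : ℕ} {S : Set (FreeMonoid (FreeStarLetter n))}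

theorem mul_cancel_left {a b c : FreeMonoid (FreeStarLetter n)} (h : a * b = a * c) : b = c :=
  FreeMonoid.toList.injective (List.append_cancel_left (congrArg FreeMonoid.toList h))

/-! ### The weight function on words -/

open Classical in
noncomputable def tR (S : Set (FreeMonoid (FreeStarLetter n)))
    (w : FreeMonoid (FreeStarLetter n)) : ℝ :=
  if ¬ Forb S w ∧ ∃ p, w = wordStar p * p then τv n (w.length / 2) else 0

theorem tR_nonneg (S : Set (FreeMonoid (FreeStarLetter n)))
    (w : FreeMonoid (FreeStarLetter n)) : 0 ≤ tR S w := by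
  unfold tR; split_ifs
  · exact τv_pos.le
  · exact le_refl 0

theorem tR_ne {w : FreeMonoid (FreeStarLetter n)} (h : tR S w ≠ 0) :
    ¬ Forb S w ∧ (∃ p, w = wordStar p * p) ∧ tR S w = τv n (w.length / 2) := by
  unfold tR at h ⊢
  split_ifs at h ⊢ with hc
  · exact ⟨hc.1, hc.2, rfl⟩
  · exact absurd rfl h

theorem tR_forb {w : FreeMonoid (FreeStarLetter n)} (h : Forb S w) : tR S w = 0 := by
  unfold tR
  rw [if_neg (by tauto)]

theorem tR_wordStar (w : FreeMonoid (FreeStarLetter n)) : tR S (wordStar w) = tR S w := by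
  by_cases hsq : ∃ p, w = wordStar p * p
  · obtain ⟨p, rfl⟩ := hsq
    rw [show wordStar (wordStar p * p) = wordStar p * p by
      rw [wordStar_mul, wordStar_wordStar]]
  · have hsq' : ¬ ∃ p, wordStar w = wordStar p * p := by
      rintro ⟨p, hp⟩
      refine hsq ⟨p, ?_⟩
      have := congrArg wordStar hp
      simpa using this
    unfold tR
    rw [if_neg (by tauto), if_neg (by tauto)]

theorem tR_symm (u v : FreeMonoid (FreeStarLetter n)) :
    tR S (wordStar u * v) = tR S (wordStar v * u) := by
  have h : wordStar (wordStar u * v) = wordStar v * u := by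
    rw [wordStar_mul, wordStar_wordStar]
  rw [← h, tR_wordStar]

theorem tR_diag (hstar : ∀ w ∈ S, wordStar w ∈ S) (hunshrink : ∀ w ∈ S, Unshrinkable w)
    {u : FreeMonoid (FreeStarLetter n)} (hu : ¬ Forb S u) :
    tR S (wordStar u * u) = τv n u.length := by
  unfold tR
  rw [if_pos ⟨not_forb_sq hstar hunshrink hu, ⟨u, rfl⟩⟩]
  congr 1
  rw [FreeMonoid.length_mul, length_wordStar]
  omega

/-! ### Counting words -/

theorem sum_half_le (G : Finset ℕ) (hG : ∀ g ∈ G, 1 ≤ g) :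
    ∑ g ∈ G, ((1:ℝ)/2) ^ g ≤ 1 := by
  classical
  have key : ∀ N : ℕ, ∑ g ∈ Finset.Icc 1 N, ((1:ℝ)/2) ^ g = 1 - (1/2)^N := by
    intro N
    induction N with
    | zero => simp
    | succ N ih =>
      rw [← Finset.insert_Icc_right_eq_Icc_add_one (by omega : 1 ≤ N + 1)]
      rw [Finset.sum_insert (by simp)]
      rw [ih, pow_succ]
      ring
  have hsub : G ⊆ Finset.Icc 1 (G.sup id) := fun g hg =>
    Finset.mem_Icc.mpr ⟨hG g hg, Finset.le_sup (f := id) hg⟩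
  calc ∑ g ∈ G, ((1:ℝ)/2)^g
      ≤ ∑ g ∈ Finset.Icc 1 (G.sup id), ((1:ℝ)/2)^g :=
        Finset.sum_le_sum_of_subset_of_nonneg hsub (fun _ _ _ => by positivity)
    _ = 1 - (1/2)^(G.sup id) := key _
    _ ≤ 1 := by nlinarith [pow_pos (by norm_num : (0:ℝ) < 1/2) (G.sup id)]

open Classical in
noncomputable def wordsLen (n g : ℕ) : Finset (FreeMonoid (FreeStarLetter n)) :=
  (Finset.univ : Finset (Fin g → FreeStarLetter n)).image fun F => FreeMonoid.ofList (List.ofFn F)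

open Classical in
theorem card_wordsLen (g : ℕ) : (wordsLen n g).card ≤ (n + n) ^ g := by
  refine le_trans Finset.card_image_le ?_
  rw [Finset.card_univ]
  have : Fintype.card (Fin g → FreeStarLetter n) = (n + n) ^ g := by
    simp [Fintype.card_fun]
  rw [this]

open Classical in
theorem mem_wordsLen {w : FreeMonoid (FreeStarLetter n)} {g : ℕ} (h : w.length = g) :
    w ∈ wordsLen n g := by
  subst h
  refine Finset.mem_image.mpr ⟨w.toList.get, Finset.mem_univ _, ?_⟩
  show FreeMonoid.ofList (List.ofFn w.toList.get) = w
  rw [List.ofFn_get]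
  rfl

theorem take_mul (a b : FreeMonoid (FreeStarLetter n)) :
    (FreeMonoid.toList (a * b)).take a.length = FreeMonoid.toList a := by
  rw [FreeMonoid.toList_mul]
  exact List.take_left

theorem down_unique {u v1 v2 c1 c2 : FreeMonoid (FreeStarLetter n)}
    (h1 : u = wordStar c1 * (c1 * v1)) (h2 : u = wordStar c2 * (c2 * v2))
    (hl : c1.length = c2.length) : v1 = v2 := by
  have h := h1.symm.trans h2
  rcases mul_eq_mul_cases h with ⟨e, he1, he2⟩ | ⟨e, he1, he2⟩
  · -- he1 : wordStar c2 = wordStar c1 * e, he2 : c1 * v1 = e * (c2 * v2)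
    have hlen : e.length = 0 := by
      have := congrArg FreeMonoid.length he1
      rw [FreeMonoid.length_mul, length_wordStar, length_wordStar] at this
      omega
    have he : e = 1 := FreeMonoid.length_eq_zero.mp hlen
    subst he
    rw [one_mul] at he2
    rw [mul_one] at he1
    have hc : c2 = c1 := by
      have := congrArg wordStar he1
      simpa using this
    subst hc
    exact mul_cancel_left he2
  · -- he1 : wordStar c1 = wordStar c2 * e, he2 : c2 * v2 = e * (c1 * v1)
    have hlen : e.length = 0 := by
      have := congrArg FreeMonoid.length he1
      rw [FreeMonoid.length_mul, length_wordStar, length_wordStar] at this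
      omega
    have he : e = 1 := FreeMonoid.length_eq_zero.mp hlen
    subst he
    rw [one_mul] at he2
    rw [mul_one] at he1
    have hc : c1 = c2 := by
      have := congrArg wordStar he1
      simpa using this
    subst hc
    exact (mul_cancel_left he2).symm

/-! ### Per-γ numeric bounds -/

theorem per_gamma_up {g : ℕ} (hg : 1 ≤ g) :
    ((n + n : ℕ) : ℝ) ^ g * μv n ^ (2*g*g) ≤ 1/3 * (1/2)^g := by
  have h1 : μv n ^ (2*g*g) ≤ μv n ^ (2*g) :=
    pow_le_pow_of_le_one μv_pos.le μv_le_one (by nlinarith)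
  have h2 : ((n+n:ℕ):ℝ)^g * μv n ^ (2*g) = (((n:ℝ)+n) * μv n^2)^g := by
    rw [mul_pow, ← pow_mul]
    norm_num [Nat.cast_add]
  have h3 : ((n:ℝ)+n) * μv n ^ 2 ≤ 1/6 := by
    have ha := two_n_mul_μv_le (n := n)
    have hb := μv_le_third (n := n)
    have hc := μv_pos (n := n)
    nlinarith
  calc ((n+n:ℕ):ℝ)^g * μv n ^(2*g*g)
      ≤ ((n+n:ℕ):ℝ)^g * μv n ^(2*g) := by
        have : (0:ℝ) ≤ ((n+n:ℕ):ℝ)^g := by positivity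
        exact mul_le_mul_of_nonneg_left h1 this
    _ = (((n:ℝ)+n) * μv n^2)^g := h2
    _ ≤ (1/6)^g := pow_le_pow_left₀ (by positivity) h3 g
    _ = (1/3)^g * (1/2)^g := by norm_num [← mul_pow]
    _ ≤ 1/3 * (1/2)^g := by
        refine mul_le_mul_of_nonneg_right ?_ (by positivity)
        calc (1/3:ℝ)^g ≤ (1/3)^1 := pow_le_pow_of_le_one (by norm_num) (by norm_num) hg
          _ = 1/3 := pow_one _

theorem per_gamma_dn {g : ℕ} (hg : 1 ≤ g) :
    μv n ^ (2*g*g) ≤ 1/3 * (1/2)^g := by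
  have h1 : μv n ^ (2*g*g) ≤ μv n ^ (2*g) :=
    pow_le_pow_of_le_one μv_pos.le μv_le_one (by nlinarith)
  have h2 : μv n ^ (2*g) = (μv n ^ 2)^g := by rw [← pow_mul]
  have h3 : μv n ^ 2 ≤ 1/6 := by
    have hb := μv_le_third (n := n)
    have hc := μv_pos (n := n)
    nlinarith
  calc μv n ^(2*g*g) ≤ μv n ^ (2*g) := h1
    _ = (μv n ^ 2)^g := h2
    _ ≤ (1/6)^g := pow_le_pow_left₀ (by positivity) h3 g
    _ = (1/3)^g * (1/2)^g := by norm_num [← mul_pow]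
    _ ≤ 1/3 * (1/2)^g := by
        refine mul_le_mul_of_nonneg_right ?_ (by positivity)
        calc (1/3:ℝ)^g ≤ (1/3)^1 := pow_le_pow_of_le_one (by norm_num) (by norm_num) hg
          _ = 1/3 := pow_one _

end OSAux
namespace OSAux
open Finset FreeStarAlgebra

variable {n : ℕ} {S : Set (FreeMonoid (FreeStarLetter n))}

theorem row_bound (hstar : ∀ w ∈ S, wordStar w ∈ S) (hunshrink : ∀ w ∈ S, Unshrinkable w)
    {u : FreeMonoid (FreeStarLetter n)} (hu : ¬ Forb S u)
    (T : Finset (FreeMonoid (FreeStarLetter n))) :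
    ∑ v ∈ T.erase u, tR S (wordStar u * v) * (dwt n v / dwt n u) ≤ 2 / 3 * τv n u.length := by
  classical
  set k := u.length with hk
  have hF0 : ∀ v, 0 ≤ tR S (wordStar u * v) * (dwt n v / dwt n u) :=
    fun v => mul_nonneg (tR_nonneg _ _) (le_of_lt (div_pos (dwt_pos _) (dwt_pos _)))
  set Up : Finset (FreeMonoid (FreeStarLetter n)) :=
    (T.erase u).filter
      (fun v => ∃ c, c ≠ (1 : FreeMonoid (FreeStarLetter n)) ∧ v = wordStar c * (c * u)) with hUpd
  set Dn : Finset (FreeMonoid (FreeStarLetter n)) :=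
    (T.erase u).filter
      (fun v => ∃ c, c ≠ (1 : FreeMonoid (FreeStarLetter n)) ∧ u = wordStar c * (c * v)) with hDnd
  have hsub : Up ∪ Dn ⊆ T.erase u :=
    Finset.union_subset (Finset.filter_subset _ _) (Finset.filter_subset _ _)
  have hzero : ∀ v ∈ T.erase u, v ∉ Up ∪ Dn →
      tR S (wordStar u * v) * (dwt n v / dwt n u) = 0 := by
    intro v hv hvn
    rcases eq_or_ne (tR S (wordStar u * v)) 0 with h0 | h0
    · rw [h0, zero_mul]
    · exfalso
      obtain ⟨-, ⟨p, hp⟩, -⟩ := tR_ne h0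
      rcases sq_cases hp with ⟨c, hc⟩ | ⟨c, hc⟩
      · rcases eq_or_ne c 1 with rfl | hc1
        · exact Finset.ne_of_mem_erase hv (by simpa using hc)
        · exact hvn (Finset.mem_union_left _ (Finset.mem_filter.mpr ⟨hv, c, hc1, hc⟩))
      · rcases eq_or_ne c 1 with rfl | hc1
        · have : u = v := by simpa using hc
          exact Finset.ne_of_mem_erase hv this.symm
        · exact hvn (Finset.mem_union_right _ (Finset.mem_filter.mpr ⟨hv, c, hc1, hc⟩))
  rw [← Finset.sum_subset hsub hzero]
  have hUplen : ∀ v ∈ Up, ∃ c : FreeMonoid (FreeStarLetter n), c ≠ 1 ∧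
      v = wordStar c * (c * u) ∧ v.length = c.length + (c.length + k) := by
    intro v hv
    obtain ⟨-, c, hc1, hc⟩ := Finset.mem_filter.mp hv
    refine ⟨c, hc1, hc, ?_⟩
    rw [hc, FreeMonoid.length_mul, FreeMonoid.length_mul, length_wordStar, ← hk]
  have hDnlen : ∀ v ∈ Dn, ∃ c : FreeMonoid (FreeStarLetter n), c ≠ 1 ∧
      u = wordStar c * (c * v) ∧ k = c.length + (c.length + v.length) := by
    intro v hv
    obtain ⟨-, c, hc1, hc⟩ := Finset.mem_filter.mp hv
    refine ⟨c, hc1, hc, ?_⟩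
    rw [hk, hc, FreeMonoid.length_mul, FreeMonoid.length_mul, length_wordStar]
  have hdisj : Disjoint Up Dn := by
    rw [Finset.disjoint_left]
    intro v hvU hvD
    obtain ⟨c, hc1, -, h1⟩ := hUplen v hvU
    obtain ⟨c', hc1', -, h2⟩ := hDnlen v hvD
    have g1 : 1 ≤ c.length := one_le_length_of_ne_one hc1
    have g2 : 1 ≤ c'.length := one_le_length_of_ne_one hc1'
    omega
  rw [Finset.sum_union hdisj]
  -- pointwise bounds
  have hptUp : ∀ v ∈ Up, tR S (wordStar u * v) * (dwt n v / dwt n u)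
      ≤ τv n k * μv n ^ (2 * ((v.length - k)/2) * ((v.length - k)/2)) := by
    intro v hv
    obtain ⟨c, hc1, hvc, hlen⟩ := hUplen v hv
    have hγ1 : 1 ≤ c.length := one_le_length_of_ne_one hc1
    have hγv : (v.length - k)/2 = c.length := by omega
    rw [hγv]
    rcases eq_or_ne (tR S (wordStar u * v)) 0 with h0 | h0
    · rw [h0, zero_mul]
      exact mul_nonneg τv_pos.le (pow_nonneg μv_pos.le _)
    · obtain ⟨-, -, hval⟩ := tR_ne h0
      have hlen2 : (wordStar u * v).length / 2 = k + c.length := by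
        rw [FreeMonoid.length_mul, length_wordStar, ← hk, hlen]; omega
      rw [hval, hlen2]
      have hkey : τv n (k + c.length) * μv n ^ (v.length * v.length)
          = τv n k * μv n ^ (2*c.length*c.length) * μv n ^ (k * k) := by
        rw [mul_assoc, ← pow_add]
        refine tau_mu_eq ?_
        rw [hlen]; ring
      rw [dwt, dwt, ← hk]
      calc τv n (k+c.length) * (μv n ^ (v.length*v.length) / μv n ^ (k*k))
          = (τv n (k+c.length) * μv n ^ (v.length*v.length)) / μv n ^ (k*k) := by ring
        _ = (τv n k * μv n ^ (2*c.length*c.length) * μv n ^ (k*k)) / μv n ^ (k*k) := by rw [hkey]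
        _ = τv n k * μv n ^ (2*c.length*c.length) := by
            rw [mul_div_assoc, div_self (pow_ne_zero _ (μv_pos).ne'), mul_one]
        _ ≤ τv n k * μv n ^ (2*c.length*c.length) := le_refl _
  have hptDn : ∀ v ∈ Dn, tR S (wordStar u * v) * (dwt n v / dwt n u)
      ≤ τv n k * μv n ^ (2 * ((k - v.length)/2) * ((k - v.length)/2)) := by
    intro v hv
    obtain ⟨c, hc1, hvc, hlen⟩ := hDnlen v hv
    have hγ1 : 1 ≤ c.length := one_le_length_of_ne_one hc1
    have hγv : (k - v.length)/2 = c.length := by omega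
    rw [hγv]
    rcases eq_or_ne (tR S (wordStar u * v)) 0 with h0 | h0
    · rw [h0, zero_mul]
      exact mul_nonneg τv_pos.le (pow_nonneg μv_pos.le _)
    · obtain ⟨-, -, hval⟩ := tR_ne h0
      have hlen2 : (wordStar u * v).length / 2 = v.length + c.length := by
        rw [FreeMonoid.length_mul, length_wordStar, ← hk]; omega
      rw [hval, hlen2]
      have hkey : τv n (v.length + c.length) * μv n ^ (v.length * v.length)
          = τv n k * μv n ^ (2*c.length*c.length) * μv n ^ (k * k) := by
        rw [mul_assoc, ← pow_add]
        refine tau_mu_eq ?_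
        rw [hlen]; ring
      rw [dwt, dwt, ← hk]
      calc τv n (v.length+c.length) * (μv n ^ (v.length*v.length) / μv n ^ (k*k))
          = (τv n (v.length+c.length) * μv n ^ (v.length*v.length)) / μv n ^ (k*k) := by ring
        _ = (τv n k * μv n ^ (2*c.length*c.length) * μv n ^ (k*k)) / μv n ^ (k*k) := by rw [hkey]
        _ = τv n k * μv n ^ (2*c.length*c.length) := by
            rw [mul_div_assoc, div_self (pow_ne_zero _ (μv_pos).ne'), mul_one]
        _ ≤ τv n k * μv n ^ (2*c.length*c.length) := le_refl _
  -- counting: the Up part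
  have hUpCount : ∑ v ∈ Up, μv n ^ (2 * ((v.length - k)/2) * ((v.length - k)/2)) ≤ 1/3 := by
    set γf : FreeMonoid (FreeStarLetter n) → ℕ := fun v => (v.length - k)/2 with hγf
    have hmaps : ∀ v ∈ Up, γf v ∈ Up.image γf := fun v hv => Finset.mem_image_of_mem _ hv
    rw [← Finset.sum_fiberwise_of_maps_to hmaps]
    have hfib : ∀ g ∈ Up.image γf,
        ∑ v ∈ Up.filter (fun v => γf v = g), μv n ^ (2 * γf v * γf v) ≤ 1/3 * (1/2)^g := by
      intro g hg
      obtain ⟨v0, hv0, hv0g⟩ := Finset.mem_image.mp hg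
      obtain ⟨c0, hc01, -, hlen0⟩ := hUplen v0 hv0
      have hg1 : 1 ≤ g := by
        have := one_le_length_of_ne_one hc01
        have : γf v0 = c0.length := by simp only [hγf]; omega
        omega
      have hconst : ∑ v ∈ Up.filter (fun v => γf v = g), μv n ^ (2 * γf v * γf v)
          = ((Up.filter (fun v => γf v = g)).card : ℝ) * μv n ^ (2*g*g) := by
        rw [Finset.sum_congr rfl (fun v hv => by rw [(Finset.mem_filter.mp hv).2]),
          Finset.sum_const, nsmul_eq_mul]
      rw [hconst]
      have hcard : ((Up.filter (fun v => γf v = g)).card : ℝ) ≤ ((n+n : ℕ) : ℝ)^g := by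
        have hcard' : (Up.filter (fun v => γf v = g)).card ≤ (wordsLen n g).card := by
          refine Finset.card_le_card_of_injOn
            (fun v => FreeMonoid.ofList ((FreeMonoid.toList v).take g)) ?_ ?_
          · intro v hv
            obtain ⟨hvU, hvg⟩ := Finset.mem_filter.mp hv
            obtain ⟨c, hc1, hvc, hlen⟩ := hUplen v hvU
            have hcg : c.length = g := by
              have : γf v = (v.length - k)/2 := rfl
              omega
            have htake : (FreeMonoid.toList v).take g = FreeMonoid.toList (wordStar c) := by
              rw [hvc, show g = (wordStar c).length by rw [length_wordStar, hcg]]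
              exact take_mul _ _
            have heq : FreeMonoid.ofList ((FreeMonoid.toList v).take g) = wordStar c := by
              rw [htake]; rfl
            show FreeMonoid.ofList ((FreeMonoid.toList v).take g) ∈ wordsLen n g
            rw [heq]
            exact mem_wordsLen (by rw [length_wordStar, hcg])
          · intro v1 h1 v2 h2 heq
            dsimp only at heq
            obtain ⟨h1U, h1g⟩ := Finset.mem_filter.mp h1
            obtain ⟨h2U, h2g⟩ := Finset.mem_filter.mp h2
            obtain ⟨c1, hc11, hv1c, hlen1⟩ := hUplen v1 h1U
            obtain ⟨c2, hc21, hv2c, hlen2⟩ := hUplen v2 h2U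
            have hcg1 : c1.length = g := by
              have : γf v1 = (v1.length - k)/2 := rfl
              omega
            have hcg2 : c2.length = g := by
              have : γf v2 = (v2.length - k)/2 := rfl
              omega
            have ht1 : FreeMonoid.ofList ((FreeMonoid.toList v1).take g) = wordStar c1 := by
              rw [hv1c, show g = (wordStar c1).length by rw [length_wordStar, hcg1]]
              rw [take_mul]; rfl
            have ht2 : FreeMonoid.ofList ((FreeMonoid.toList v2).take g) = wordStar c2 := by
              rw [hv2c, show g = (wordStar c2).length by rw [length_wordStar, hcg2]]
              rw [take_mul]; rfl
            have hcc : c1 = c2 := by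
              have hws : wordStar c1 = wordStar c2 := by rw [← ht1, ← ht2]; exact heq
              have := congrArg wordStar hws
              simpa using this
            rw [hv1c, hv2c, hcc]
        calc ((Up.filter (fun v => γf v = g)).card : ℝ)
            ≤ ((wordsLen n g).card : ℝ) := by exact_mod_cast hcard'
          _ ≤ ((n+n : ℕ) : ℝ)^g := by exact_mod_cast card_wordsLen g
      calc ((Up.filter (fun v => γf v = g)).card : ℝ) * μv n ^ (2*g*g)
          ≤ ((n+n : ℕ) : ℝ)^g * μv n ^ (2*g*g) :=
            mul_le_mul_of_nonneg_right hcard (pow_nonneg μv_pos.le _)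
        _ ≤ 1/3 * (1/2)^g := per_gamma_up hg1
    calc ∑ g ∈ Up.image γf, ∑ v ∈ Up.filter (fun v => γf v = g), μv n ^ (2 * γf v * γf v)
        ≤ ∑ g ∈ Up.image γf, 1/3 * (1/2)^g := Finset.sum_le_sum hfib
      _ = 1/3 * ∑ g ∈ Up.image γf, ((1:ℝ)/2)^g := by rw [Finset.mul_sum]
      _ ≤ 1/3 * 1 := by
          refine mul_le_mul_of_nonneg_left ?_ (by norm_num)
          refine sum_half_le _ fun g hg => ?_
          obtain ⟨v0, hv0, hv0g⟩ := Finset.mem_image.mp hg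
          obtain ⟨c0, hc01, -, hlen0⟩ := hUplen v0 hv0
          have := one_le_length_of_ne_one hc01
          have : γf v0 = c0.length := by simp only [hγf]; omega
          omega
      _ = 1/3 := mul_one _
  -- counting: the Dn part
  have hDnCount : ∑ v ∈ Dn, μv n ^ (2 * ((k - v.length)/2) * ((k - v.length)/2)) ≤ 1/3 := by
    set γf : FreeMonoid (FreeStarLetter n) → ℕ := fun v => (k - v.length)/2 with hγf
    have hmaps : ∀ v ∈ Dn, γf v ∈ Dn.image γf := fun v hv => Finset.mem_image_of_mem _ hv
    rw [← Finset.sum_fiberwise_of_maps_to hmaps]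
    have hfib : ∀ g ∈ Dn.image γf,
        ∑ v ∈ Dn.filter (fun v => γf v = g), μv n ^ (2 * γf v * γf v) ≤ 1/3 * (1/2)^g := by
      intro g hg
      obtain ⟨v0, hv0, hv0g⟩ := Finset.mem_image.mp hg
      obtain ⟨c0, hc01, -, hlen0⟩ := hDnlen v0 hv0
      have hg1 : 1 ≤ g := by
        have := one_le_length_of_ne_one hc01
        have : γf v0 = c0.length := by simp only [hγf]; omega
        omega
      have hconst : ∑ v ∈ Dn.filter (fun v => γf v = g), μv n ^ (2 * γf v * γf v)
          = ((Dn.filter (fun v => γf v = g)).card : ℝ) * μv n ^ (2*g*g) := by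
        rw [Finset.sum_congr rfl (fun v hv => by rw [(Finset.mem_filter.mp hv).2]),
          Finset.sum_const, nsmul_eq_mul]
      rw [hconst]
      have hcard : ((Dn.filter (fun v => γf v = g)).card : ℝ) ≤ 1 := by
        have hcard' : (Dn.filter (fun v => γf v = g)).card ≤ 1 := by
          refine Finset.card_le_one.mpr fun v1 h1 v2 h2 => ?_
          obtain ⟨h1D, h1g⟩ := Finset.mem_filter.mp h1
          obtain ⟨h2D, h2g⟩ := Finset.mem_filter.mp h2
          obtain ⟨c1, hc11, hv1c, hlen1⟩ := hDnlen v1 h1D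
          obtain ⟨c2, hc21, hv2c, hlen2⟩ := hDnlen v2 h2D
          have hcg1 : c1.length = g := by
            have : γf v1 = (k - v1.length)/2 := rfl
            omega
          have hcg2 : c2.length = g := by
            have : γf v2 = (k - v2.length)/2 := rfl
            omega
          exact down_unique hv1c hv2c (by omega)
        exact_mod_cast hcard'
      calc ((Dn.filter (fun v => γf v = g)).card : ℝ) * μv n ^ (2*g*g)
          ≤ 1 * μv n ^ (2*g*g) :=
            mul_le_mul_of_nonneg_right hcard (pow_nonneg μv_pos.le _)
        _ = μv n ^ (2*g*g) := one_mul _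
        _ ≤ 1/3 * (1/2)^g := per_gamma_dn hg1
    calc ∑ g ∈ Dn.image γf, ∑ v ∈ Dn.filter (fun v => γf v = g), μv n ^ (2 * γf v * γf v)
        ≤ ∑ g ∈ Dn.image γf, 1/3 * (1/2)^g := Finset.sum_le_sum hfib
      _ = 1/3 * ∑ g ∈ Dn.image γf, ((1:ℝ)/2)^g := by rw [Finset.mul_sum]
      _ ≤ 1/3 * 1 := by
          refine mul_le_mul_of_nonneg_left ?_ (by norm_num)
          refine sum_half_le _ fun g hg => ?_
          obtain ⟨v0, hv0, hv0g⟩ := Finset.mem_image.mp hg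
          obtain ⟨c0, hc01, -, hlen0⟩ := hDnlen v0 hv0
          have := one_le_length_of_ne_one hc01
          have : γf v0 = c0.length := by simp only [hγf]; omega
          omega
      _ = 1/3 := mul_one _
  -- put the two halves together
  have hUpB : ∑ v ∈ Up, tR S (wordStar u * v) * (dwt n v / dwt n u) ≤ 1/3 * τv n k := by
    calc ∑ v ∈ Up, tR S (wordStar u * v) * (dwt n v / dwt n u)
        ≤ ∑ v ∈ Up, τv n k * μv n ^ (2 * ((v.length - k)/2) * ((v.length - k)/2)) :=
          Finset.sum_le_sum hptUp
      _ = τv n k * ∑ v ∈ Up, μv n ^ (2 * ((v.length - k)/2) * ((v.length - k)/2)) := by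
          rw [Finset.mul_sum]
      _ ≤ τv n k * (1/3) := mul_le_mul_of_nonneg_left hUpCount τv_pos.le
      _ = 1/3 * τv n k := by ring
  have hDnB : ∑ v ∈ Dn, tR S (wordStar u * v) * (dwt n v / dwt n u) ≤ 1/3 * τv n k := by
    calc ∑ v ∈ Dn, tR S (wordStar u * v) * (dwt n v / dwt n u)
        ≤ ∑ v ∈ Dn, τv n k * μv n ^ (2 * ((k - v.length)/2) * ((k - v.length)/2)) :=
          Finset.sum_le_sum hptDn
      _ = τv n k * ∑ v ∈ Dn, μv n ^ (2 * ((k - v.length)/2) * ((k - v.length)/2)) := by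
          rw [Finset.mul_sum]
      _ ≤ τv n k * (1/3) := mul_le_mul_of_nonneg_left hDnCount τv_pos.le
      _ = 1/3 * τv n k := by ring
  linarith

end OSAux
namespace OSAux
open Finset FreeStarAlgebra

variable {n : ℕ} {S : Set (FreeMonoid (FreeStarLetter n))}

/-! ### The linear functional on the free *-algebra -/

noncomputable def phi0 (S : Set (FreeMonoid (FreeStarLetter n))) :
    FreeStarAlgebra n →ₗ[ℂ] ℂ :=
  (Finsupp.lsum ℂ fun w => LinearMap.toSpanSingleton ℂ ℂ ((tR S w : ℝ) : ℂ)).comp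
    (MonoidAlgebra.coeffLinearEquiv ℂ).toLinearMap

theorem phi0_single (w : FreeMonoid (FreeStarLetter n)) (c : ℂ) :
    phi0 S (MonoidAlgebra.single w c) = c * ((tR S w : ℝ) : ℂ) := by
  rw [phi0, LinearMap.comp_apply]
  erw [Finsupp.lsum_single]
  simp [LinearMap.toSpanSingleton_apply, smul_eq_mul]

theorem phi0_eq_zero {f : FreeStarAlgebra n} (hf : ∀ w, ¬ Forb S w → f.coeff w = 0) :
    phi0 S f = 0 := by
  have hrw : phi0 S f = ∑ w ∈ f.coeff.support, f.coeff w * ((tR S w : ℝ) : ℂ) := by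
    simp only [phi0, LinearMap.comp_apply, Finsupp.lsum_apply, LinearMap.toSpanSingleton_apply, smul_eq_mul]
    rfl
  rw [hrw]
  refine Finset.sum_eq_zero fun w hw => ?_
  have hforb : Forb S w := by
    by_contra hn
    exact Finsupp.mem_support_iff.mp hw (hf w hn)
  simp [tR_forb hforb]

theorem phi0_star (f : FreeStarAlgebra n) :
    phi0 S (star f) = (starRingEnd ℂ) (phi0 S f) := by
  induction f using MonoidAlgebra.induction_linear with
  | zero => simp
  | add f g hf hg => rw [star_add, map_add, map_add, map_add, hf, hg]
  | single w c =>
    rw [star_single, phi0_single, phi0_single, tR_wordStar, map_mul]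
    rw [Complex.conj_ofReal]

theorem phi0_conj (f g : FreeStarAlgebra n) :
    (starRingEnd ℂ) (phi0 S (star g * f)) = phi0 S (star f * g) := by
  rw [← phi0_star, star_mul, star_star]

theorem phi0_star_mul (g h : FreeStarAlgebra n) :
    phi0 S (star g * h) = ∑ u ∈ g.coeff.support, ∑ v ∈ h.coeff.support,
      (starRingEnd ℂ) (g.coeff u) * h.coeff v * ((tR S (wordStar u * v) : ℝ) : ℂ) := by
  conv_lhs => rw [show g = ∑ u ∈ g.coeff.support, MonoidAlgebra.single u (g.coeff u) from
      (MonoidAlgebra.sum_coeff_single g).symm,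
    show h = ∑ v ∈ h.coeff.support, MonoidAlgebra.single v (h.coeff v) from
      (MonoidAlgebra.sum_coeff_single h).symm]
  rw [star_sum, Finset.sum_mul, map_sum]
  refine Finset.sum_congr rfl fun u hu => ?_
  rw [Finset.mul_sum, map_sum]
  refine Finset.sum_congr rfl fun v hv => ?_
  rw [star_single, MonoidAlgebra.single_mul_single, phi0_single]

/-! ### The null space -/

def Good (S : Set (FreeMonoid (FreeStarLetter n))) (f : FreeStarAlgebra n) : Prop :=
  ∀ w, ¬ Forb S w → f.coeff w = 0

theorem Good.mul_right {f : FreeStarAlgebra n} (hf : Good S f) (c : FreeStarAlgebra n) :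
    Good S (f * c) := by
  intro w hw
  by_contra h0
  have hw' : w ∈ (f * c).coeff.support := Finsupp.mem_support_iff.mpr h0
  have hmem := MonoidAlgebra.support_coeff_mul_subset f c hw'
  rw [Finset.mem_mul] at hmem
  obtain ⟨x, hx, y, hy, rfl⟩ := hmem
  have hxf : Forb S x := by
    by_contra hxn
    exact Finsupp.mem_support_iff.mp hx (hf x hxn)
  exact hw (hxf.mul_right y)

theorem Good.mul_left {f : FreeStarAlgebra n} (hf : Good S f) (c : FreeStarAlgebra n) :
    Good S (c * f) := by
  intro w hw
  by_contra h0
  have hw' : w ∈ (c * f).coeff.support := Finsupp.mem_support_iff.mpr h0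
  have hmem := MonoidAlgebra.support_coeff_mul_subset c f hw'
  rw [Finset.mem_mul] at hmem
  obtain ⟨x, hx, y, hy, rfl⟩ := hmem
  have hyf : Forb S y := by
    by_contra hyn
    exact Finsupp.mem_support_iff.mp hy (hf y hyn)
  exact hw (hyf.mul_left x)

theorem rel_good {f g : FreeStarAlgebra n} (h : RingQuot.Rel (monRel S) f g) :
    Good S (f - g) := by
  induction h with
  | of hxy =>
    obtain ⟨⟨s, hs, rfl⟩, rfl⟩ := hxy
    intro w hw
    rw [sub_zero]
    have hws : s ≠ w := fun hws => hw (hws ▸ forb_of_mem hs)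
    exact Finsupp.single_eq_of_ne' hws
  | add_left r ih =>
    intro w hw
    have h2 := ih w hw
    rw [add_sub_add_right_eq_sub]
    exact h2
  | mul_left r ih =>
    rw [← sub_mul]
    exact ih.mul_right _
  | mul_right r ih =>
    rw [← mul_sub]
    exact ih.mul_left _

theorem phi0_rel {f g : FreeStarAlgebra n} (h : RingQuot.Rel (monRel S) f g) :
    phi0 S f = phi0 S g := by
  have h0 : phi0 S (f - g) = 0 := phi0_eq_zero (rel_good h)
  rw [map_sub] at h0
  exact sub_eq_zero.mp h0

theorem mkAlgHom_eq_zero {f : FreeStarAlgebra n} (hf : Good S f) :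
    RingQuot.mkAlgHom ℂ (monRel S) f = 0 := by
  conv_lhs => rw [show f = ∑ w ∈ f.coeff.support, MonoidAlgebra.single w (f.coeff w) from
    (MonoidAlgebra.sum_coeff_single f).symm]
  rw [map_sum]
  refine Finset.sum_eq_zero fun w hw => ?_
  have hforb : Forb S w := by
    by_contra hn
    exact Finsupp.mem_support_iff.mp hw (hf w hn)
  obtain ⟨a, s, b, hs, rfl⟩ := hforb
  have h1 : (MonoidAlgebra.single (a * s * b) (f.coeff (a * s * b)) : FreeStarAlgebra n)
      = MonoidAlgebra.single a (f.coeff (a * s * b)) * MonoidAlgebra.single s 1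
        * MonoidAlgebra.single b 1 := by
    rw [MonoidAlgebra.single_mul_single, MonoidAlgebra.single_mul_single, mul_one, mul_one]
  have h2 : RingQuot.mkAlgHom ℂ (monRel S) (MonoidAlgebra.single s 1) = 0 := by
    have h3 := RingQuot.mkAlgHom_rel ℂ
      (show monRel S (MonoidAlgebra.single s 1) 0 from ⟨⟨s, hs, rfl⟩, rfl⟩)
    simpa using h3
  rw [h1, map_mul, map_mul, h2, mul_zero, zero_mul]

/-! ### Positivity -/

theorem phi0_pos (hstar : ∀ w ∈ S, wordStar w ∈ S) (hunshrink : ∀ w ∈ S, Unshrinkable w)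
    (g : FreeStarAlgebra n) (hsupp : ∀ w ∈ g.coeff.support, ¬ Forb S w) (hg : g ≠ 0) :
    0 < (phi0 S (star g * g)).re := by
  classical
  rw [phi0_star_mul]
  refine pd_sum g.coeff.support (Finsupp.support_nonempty_iff.mpr (MonoidAlgebra.coeff_eq_zero.not.mpr hg)) (fun w => g.coeff w)
    (fun u hu => Finsupp.mem_support_iff.mp hu)
    (fun u v => tR S (wordStar u * v)) (dwt n)
    (fun u v => tR_nonneg _ _) (fun u v => tR_symm u v) dwt_pos ?_ ?_
  · intro u hu
    rw [tR_diag hstar hunshrink (hsupp u hu)]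
    exact row_bound hstar hunshrink (hsupp u hu) g.coeff.support
  · intro u hu
    rw [tR_diag hstar hunshrink (hsupp u hu)]
    exact τv_pos

end OSAux
/-- the quotient of the free `*`-algebra on `x₁, …, x_n` by the two-sided ideal
generated by a star-closed set `S` of unshrinkable words is O*-representable.  (The quotient
carries the `*`-ring structure inherited from the free `*`-algebra.) -/
theorem monomial_starAlgebra_oStarRepresentable
    (S : Set (FreeMonoid (FreeStarLetter n)))
    (hstar : ∀ w ∈ S, wordStar w ∈ S)
    (hunshrink : ∀ w ∈ S, Unshrinkable w) :
    @OStarRepresentable (RingQuot (monRel S)) _ _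
      (RingQuot.starRing (monRel S) (monRel_star S hstar)).toStarMul.toInvolutiveStar.toStar := by
  classical
  letI : StarRing (RingQuot (monRel S)) := RingQuot.starRing (monRel S) (monRel_star S hstar)
  set ρ : FreeStarAlgebra n →ₐ[ℂ] RingQuot (monRel S) := RingQuot.mkAlgHom ℂ (monRel S) with hρ
  have hsurj : Function.Surjective ρ := RingQuot.mkAlgHom_surjective ℂ (monRel S)
  have hmk : ∀ f : FreeStarAlgebra n, ρ f = ⟨Quot.mk _ f⟩ := by
    intro f
    have h1 : ρ f = RingQuot.mkRingHom (monRel S) f := by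
      rw [hρ, RingQuot.mkAlgHom_def]
      rfl
    rw [h1, RingQuot.mkRingHom_def]
    rfl
  let φ : RingQuot (monRel S) → ℂ := fun a =>
    Quot.lift (fun f => OSAux.phi0 S f) (fun _ _ h => OSAux.phi0_rel h) a.toQuot
  have hφ : ∀ f, φ (ρ f) = OSAux.phi0 S f := fun f => by rw [hmk]
  have hstarρ : ∀ f, star (ρ f) = ρ (star f) := by
    intro f
    rw [hmk, hmk]
    rfl
  have hker : ∀ f : FreeStarAlgebra n, OSAux.Good S f → ρ f = 0 :=
    fun f hf => OSAux.mkAlgHom_eq_zero hf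
  have hrep : ∀ x : RingQuot (monRel S),
      ∃ f : FreeStarAlgebra n, ρ f = x ∧ ∀ w ∈ f.coeff.support, ¬ OSAux.Forb S w := by
    intro x
    obtain ⟨f0, rfl⟩ := hsurj x
    set f1 : FreeStarAlgebra n := MonoidAlgebra.ofCoeff (f0.coeff.filter (fun w => ¬ OSAux.Forb S w)) with hf1
    refine ⟨f1, ?_, ?_⟩
    · have hg : OSAux.Good S (f0 - f1) := by
        intro w hw
        rw [MonoidAlgebra.coeff_sub, Finsupp.sub_apply, hf1, MonoidAlgebra.coeff_ofCoeff,
          Finsupp.filter_apply_pos (fun w => ¬ OSAux.Forb S w) f0.coeff hw, sub_self]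
      have h0 := hker _ hg
      rw [map_sub] at h0
      exact (sub_eq_zero.mp h0).symm
    · intro w hw
      rw [hf1, MonoidAlgebra.coeff_ofCoeff, Finsupp.support_filter, Finset.mem_filter] at hw
      exact hw.2
  letI instInner : Inner ℂ (RingQuot (monRel S)) := ⟨fun x y => φ (star x * y)⟩
  have hinner : ∀ f g : FreeStarAlgebra n,
      (inner ℂ (ρ f) (ρ g) : ℂ) = OSAux.phi0 S (star f * g) := by
    intro f g
    show φ (star (ρ f) * ρ g) = _
    rw [hstarρ, ← map_mul, hφ]
  have posdef : ∀ x : RingQuot (monRel S), x ≠ 0 → 0 < (inner ℂ x x : ℂ).re := by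
    intro x hx
    obtain ⟨f, rfl, hfs⟩ := hrep x
    have hf0 : f ≠ 0 := by rintro rfl; exact hx (map_zero ρ)
    rw [hinner]
    exact OSAux.phi0_pos hstar hunshrink f hfs hf0
  have hzero : (inner ℂ (0 : RingQuot (monRel S)) (0 : RingQuot (monRel S)) : ℂ) = 0 := by
    have h0 : (0 : RingQuot (monRel S)) = ρ 0 := (map_zero ρ).symm
    rw [h0, hinner, star_zero, zero_mul, map_zero]
  letI core : InnerProductSpace.Core ℂ (RingQuot (monRel S)) :=
  { inner := fun x y => φ (star x * y)
    conj_inner_symm := by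
      intro x y
      obtain ⟨f, rfl⟩ := hsurj x
      obtain ⟨g, rfl⟩ := hsurj y
      show (starRingEnd ℂ) (φ (star (ρ g) * ρ f)) = φ (star (ρ f) * ρ g)
      rw [hstarρ, hstarρ, ← map_mul, ← map_mul, hφ, hφ]
      exact OSAux.phi0_conj f g
    re_inner_nonneg := by
      intro x
      rcases eq_or_ne x 0 with rfl | hx
      · show 0 ≤ (inner ℂ (0 : RingQuot (monRel S)) (0 : RingQuot (monRel S)) : ℂ).re
        rw [hzero]
        norm_num
      · exact (posdef x hx).le
    definite := by
      intro x hx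
      by_contra hne
      have hpos := posdef x hne
      have hx' : (inner ℂ x x : ℂ) = 0 := hx
      rw [hx'] at hpos
      norm_num at hpos
    add_left := by
      intro x y z
      obtain ⟨f, rfl⟩ := hsurj x
      obtain ⟨g, rfl⟩ := hsurj y
      obtain ⟨h, rfl⟩ := hsurj z
      show φ (star (ρ f + ρ g) * ρ h) = φ (star (ρ f) * ρ h) + φ (star (ρ g) * ρ h)
      rw [← map_add, hstarρ, hstarρ, hstarρ, ← map_mul, ← map_mul, ← map_mul, hφ, hφ, hφ]
      rw [star_add, add_mul, map_add]
    smul_left := by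
      intro x y r
      obtain ⟨f, rfl⟩ := hsurj x
      obtain ⟨g, rfl⟩ := hsurj y
      show φ (star (r • ρ f) * ρ g) = (starRingEnd ℂ) r * φ (star (ρ f) * ρ g)
      rw [← map_smul, hstarρ, hstarρ, ← map_mul, ← map_mul, hφ, hφ]
      rw [star_smul, smul_mul_assoc, map_smul]
      simp [smul_eq_mul] }
  letI nacg : NormedAddCommGroup (RingQuot (monRel S)) :=
    @InnerProductSpace.Core.toNormedAddCommGroup ℂ (RingQuot (monRel S)) _ _ _ core
  letI ips : InnerProductSpace ℂ (RingQuot (monRel S)) := InnerProductSpace.ofCore core.toCore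
  unfold OStarRepresentable
  refine ⟨RingQuot (monRel S), nacg, ips, Algebra.lmul ℂ (RingQuot (monRel S)), ?_, ?_⟩
  · intro a b hab
    have h1 := DFunLike.congr_fun hab (1 : RingQuot (monRel S))
    simpa using h1
  · intro b ξ η
    show φ (star ((Algebra.lmul ℂ (RingQuot (monRel S)) b) ξ) * η)
        = φ (star ξ * ((Algebra.lmul ℂ (RingQuot (monRel S)) (star b)) η))
    have hb : ∀ (c x : RingQuot (monRel S)), (Algebra.lmul ℂ (RingQuot (monRel S)) c) x = c * x :=
      fun c x => rfl
    rw [hb, hb, star_mul, mul_assoc]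

end Stmt17
end
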